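/- arXiv:1910.07239 — 2 statements merged into one kernel-verified Lean document; each statement's English description precedes it below -/
import Mathlib

section
/- Let f be an orientation-preserving circle homeomorphism with irrational rotation number α = [a_1, a_2, …], unique invariant Borel probability measure μ, and let x_0 ∈ S^1. Writing δ_n = μ(I_n), for every n ≥ 1 one has q_{n−1}·δ_n ≤ 1/(a_{n+1}·a_n), and hence μ(∪_{i=0}^{q_n−1} I_{n−1}^i) = q_n·δ_{n−1} ≥ 1 − 1/(a_n·a_{n+1}). -/
open MeasureTheory Set Filter
open scoped ENNReal NNReal

noncomputable section

/-- The circle `S¹ = ℝ/ℤ`. -/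
abbrev Circle1 := AddCircle (1 : ℝ)

/-- Projection `ℝ → S¹`. -/
def projC (x : ℝ) : Circle1 := (x : Circle1)

/-- An orientation-preserving circle homeomorphism, given together with a
(strictly monotone, continuous) lift `F : ℝ → ℝ` satisfying `F (x+1) = F x + 1`. -/
structure CircleHomeo where
  toHomeo : Circle1 ≃ₜ Circle1
  lift : ℝ → ℝ
  lift_strictMono : StrictMono lift
  lift_continuous : Continuous lift
  lift_add_one : ∀ x : ℝ, lift (x + 1) = lift x + 1
  lift_proj : ∀ x : ℝ, toHomeo (projC x) = projC (lift x)

/-- The underlying map `S¹ → S¹`. -/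
def CircleHomeo.toFun (H : CircleHomeo) : Circle1 → Circle1 := H.toHomeo

/-- `α ∈ [0,1)` is the rotation number of `H`: `α = lim Fⁿ(x)/n (mod 1)`. -/
def HasRotationNumber (H : CircleHomeo) (α : ℝ) : Prop :=
  α ∈ Set.Ico (0 : ℝ) 1 ∧ ∃ β : ℝ, Int.fract β = α ∧
    ∀ x : ℝ, Filter.Tendsto (fun n : ℕ => H.lift^[n] x / n) Filter.atTop (nhds β)

/-- `μ` is an invariant Borel probability measure for `H`. -/
def IsInvProbMeasure (H : CircleHomeo) (μ : Measure Circle1) : Prop :=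
  IsProbabilityMeasure μ ∧ μ.map H.toFun = μ

/-- Hausdorff dimension of a measure: `inf {dim_H X : μ X = 1}`. -/
def dimHMeasure (μ : Measure Circle1) : ℝ≥0∞ :=
  ⨅ (X : Set Circle1) (_ : MeasurableSet X) (_ : μ X = 1), dimH X

/-- The set `D(γ,τ)` of Diophantine numbers of type `(γ,τ)`. -/
def DiophClass (γ τ : ℝ) : Set ℝ :=
  {α : ℝ | ∀ p q : ℤ, q ≠ 0 → γ / |(q : ℝ)| ^ (τ + 2) ≤ |α - (p : ℝ) / (q : ℝ)|}

/-- The set `D_τ = ⋃_{γ > 0} D(γ,τ)`. -/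
def DiophTau (τ : ℝ) : Set ℝ := {α : ℝ | ∃ γ > 0, α ∈ DiophClass γ τ}

/-- Iterates of the Gauss map, starting from `α`. -/
def gaussIter (α : ℝ) : ℕ → ℝ
  | 0 => α
  | n + 1 => Int.fract (1 / gaussIter α n)

/-- The `n`-th partial quotient `a_n` (`n ≥ 1`) of the continued fraction of `α`. -/
def cfA (α : ℝ) (n : ℕ) : ℕ := ⌊1 / gaussIter α (n - 1)⌋₊

/-- Denominators of the convergents: `q_0 = 1`, `q_1 = a_1`, `q_n = a_n q_{n-1} + q_{n-2}`. -/
def cfQ (α : ℝ) : ℕ → ℕ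
  | 0 => 1
  | 1 => cfA α 1
  | n + 2 => cfA α (n + 2) * cfQ α (n + 1) + cfQ α n

/-- Positive displacement from `a` to `z` on the circle, a number in `[0,1)`. -/
def circDisp (a z : Circle1) : ℝ := (AddCircle.equivIco 1 0 (z - a)).1

/-- The circle arc `[a, b)`. -/
def arcIco (a b : Circle1) : Set Circle1 := {z : Circle1 | circDisp a z < circDisp a b}

namespace DynPart

/-- `x_i = f^i(x_0)`. -/
def pt (H : CircleHomeo) (x0 : Circle1) (i : ℕ) : Circle1 := H.toFun^[i] x0

/-- The interval `I_n`: `[x_0, x_{q_n})` for even `n`, `[x_{q_n}, x_0)` for odd `n`. -/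
def In (H : CircleHomeo) (α : ℝ) (x0 : Circle1) (n : ℕ) : Set Circle1 :=
  if Even n then arcIco x0 (pt H x0 (cfQ α n)) else arcIco (pt H x0 (cfQ α n)) x0

/-- `I_n^i = f^i(I_n)`. -/
def Ini (H : CircleHomeo) (α : ℝ) (x0 : Circle1) (n i : ℕ) : Set Circle1 :=
  H.toFun^[i] '' In H α x0 n

/-- The dynamical partition `P_n(x_0)`. -/
def part (H : CircleHomeo) (α : ℝ) (x0 : Circle1) (n : ℕ) : Set (Set Circle1) :=
  {S | ∃ i < cfQ α n, S = Ini H α x0 (n - 1) i} ∪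
  {S | ∃ i < cfQ α (n - 1), S = Ini H α x0 n i}

/-- `Δ^{(n)}_{i,j} = I_n^{i + q_{n-1} + j q_n}`. -/
def Δ (H : CircleHomeo) (α : ℝ) (x0 : Circle1) (n i j : ℕ) : Set Circle1 :=
  Ini H α x0 n (i + cfQ α (n - 1) + j * cfQ α n)

end DynPart

/-- `φ` is a `C³` diffeomorphism from the open set `U` onto the open set `V`. -/
def IsC3DiffeoOn (φ : ℝ → ℝ) (U V : Set ℝ) : Prop :=
  IsOpen U ∧ IsOpen V ∧ ContDiffOn ℝ 3 φ U ∧ Set.BijOn φ U V ∧ ∀ x ∈ U, deriv φ x ≠ 0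

/-- `c` is a critical point of power-law type with exponent `p`: in suitable `C³`
coordinates around `c` and `H c`, the map takes the form `x ↦ x |x|^{p-1}`. -/
def IsPowerLawCritPt (H : CircleHomeo) (c p : ℝ) : Prop :=
  ∃ (U V U' V' : Set ℝ) (φ ψ : ℝ → ℝ),
    c ∈ U ∧ H.lift c ∈ U' ∧ (0 : ℝ) ∈ V ∧ (0 : ℝ) ∈ V' ∧
    IsC3DiffeoOn φ U V ∧ IsC3DiffeoOn ψ U' V' ∧
    φ c = 0 ∧ ψ (H.lift c) = 0 ∧ Set.MapsTo H.lift U U' ∧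
    ∀ x ∈ U, ψ (H.lift x) = φ x * |φ x| ^ (p - 1)

/-- A `C³` multicritical circle map: an orientation-preserving `C³` circle
homeomorphism whose critical points are exactly `c_0, …, c_{N-1}` (represented in
`[0,1)`), each of power-law type with criticality `p_i > 1`. -/
structure MulticriticalCircleMap extends CircleHomeo where
  smooth : ContDiff ℝ 3 lift
  N : ℕ
  N_pos : 0 < N
  crit : Fin N → ℝ
  crit_mem : ∀ i, crit i ∈ Set.Ico (0 : ℝ) 1
  crit_inj : Function.Injective crit
  critExp : Fin N → ℝ
  critExp_gt_one : ∀ i, 1 < critExp i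
  crit_powerLaw : ∀ i, IsPowerLawCritPt toCircleHomeo (crit i) (critExp i)
  crit_complete : ∀ x : ℝ, deriv lift x = 0 → ∃ (i : Fin N) (k : ℤ), x = crit i + (k : ℝ)

/-- `z ∈ S¹` is a critical point of `f^m`. -/
def IsCritPtOfIter (f : MulticriticalCircleMap) (m : ℕ) (z : Circle1) : Prop :=
  ∃ x : ℝ, projC x = z ∧ deriv (f.lift^[m]) x = 0

/-- Indices `0 < j < a_{n+1} - 1` such that the closure of `Δ_j^{(n)}` contains a
critical point of `T_n = f^{q_n}`. -/
def critTimesSet (f : MulticriticalCircleMap) (α : ℝ) (x0 : Circle1) (n : ℕ) : Finset ℕ :=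
  @Finset.filter ℕ
    (fun j => ∃ z ∈ closure (DynPart.Δ f.toCircleHomeo α x0 n 0 j),
      IsCritPtOfIter f (cfQ α n) z)
    (Classical.decPred _)
    (Finset.Ioo 0 (cfA α (n + 1) - 1))

/-- The number `r_n` of bridges (`r_n = #{interior critical times} + 1`). -/
def rn (f : MulticriticalCircleMap) (α : ℝ) (x0 : Circle1) (n : ℕ) : ℕ :=
  (critTimesSet f α x0 n).card + 1

/-- The critical times `0 = k_0^{(n)} < k_1^{(n)} < … < k_{r_n}^{(n)} = a_{n+1} - 1`. -/
def kTime (f : MulticriticalCircleMap) (α : ℝ) (x0 : Circle1) (n : ℕ) (s : ℕ) : ℕ :=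
  (((0 : ℕ) :: (critTimesSet f α x0 n).sort (· ≤ ·)) ++ [cfA α (n + 1) - 1]).getD s
    (cfA α (n + 1) - 1)

/-- The `s`-th bridge `G_s^{(n)} = ⋃_{k_s < j < k_{s+1}} Δ_j^{(n)}`. -/
def bridge (f : MulticriticalCircleMap) (α : ℝ) (x0 : Circle1) (n s : ℕ) : Set Circle1 :=
  ⋃ j ∈ Set.Ioo (kTime f α x0 n s) (kTime f α x0 n (s + 1)),
    DynPart.Δ f.toCircleHomeo α x0 n 0 j

/-- The trimmed bridge `G_{s,γ}^{(n)}`. -/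
def bridgeGamma (f : MulticriticalCircleMap) (α : ℝ) (x0 : Circle1) (n : ℕ) (γ : ℝ)
    (s : ℕ) : Set Circle1 :=
  ⋃ j ∈ {j : ℕ | (kTime f α x0 n s : ℝ) + (cfA α (n + 1) : ℝ) ^ γ < (j : ℝ) ∧
      (j : ℝ) < (kTime f α x0 n (s + 1) : ℝ) + 1 - (cfA α (n + 1) : ℝ) ^ γ},
    DynPart.Δ f.toCircleHomeo α x0 n 0 j

/-- `A^n_{i,γ} = ⋃_{s < r_n} f^i(G_{s,γ}^{(n)})`. -/
def Aset (f : MulticriticalCircleMap) (α : ℝ) (x0 : Circle1) (n i : ℕ) (γ : ℝ) :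
    Set Circle1 :=
  ⋃ s ∈ Set.Iio (rn f α x0 n), f.toCircleHomeo.toFun^[i] '' bridgeGamma f α x0 n γ s

/-- `A^n_γ = ⋃_{i < q_n} A^n_{i,γ}`. -/
def AsetAll (f : MulticriticalCircleMap) (α : ℝ) (x0 : Circle1) (n : ℕ) (γ : ℝ) :
    Set Circle1 :=
  ⋃ i ∈ Set.Iio (cfQ α n), Aset f α x0 n i γ

/-- The Schwarzian derivative `Sf = f'''/f' - (3/2)(f''/f')²`. -/
def schwarzianAt (f : ℝ → ℝ) (x : ℝ) : ℝ :=
  iteratedDeriv 3 f x / deriv f x - 3 / 2 * (iteratedDeriv 2 f x / deriv f x) ^ 2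

end

/-! ### Part 0: continued-fraction number theory -/

noncomputable section

namespace Stmt11NT

variable {α : ℝ}

lemma irrational_fract {x : ℝ} (hx : Irrational x) : Irrational (Int.fract x) := by
  rw [Int.fract]
  exact hx.sub_intCast _

lemma gauss_prop (hirr : Irrational α) (h0 : 0 < α) (h1 : α < 1) :
    ∀ n, Irrational (gaussIter α n) ∧ 0 < gaussIter α n ∧ gaussIter α n < 1 := by
  intro n
  induction n with
  | zero => exact ⟨hirr, h0, h1⟩
  | succ n ih =>
    obtain ⟨hi, hp, hl⟩ := ih
    have hinv : Irrational (1 / gaussIter α n) := by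
      rw [one_div]; exact hi.inv
    have hfr : Irrational (Int.fract (1 / gaussIter α n)) := irrational_fract hinv
    refine ⟨hfr, ?_, ?_⟩
    · exact lt_of_le_of_ne (Int.fract_nonneg _) (Ne.symm hfr.ne_zero)
    · exact Int.fract_lt_one _

lemma cfA_ge_one (hirr : Irrational α) (h0 : 0 < α) (h1 : α < 1) (n : ℕ) :
    1 ≤ cfA α (n + 1) := by
  obtain ⟨hi, hp, hl⟩ := gauss_prop hirr h0 h1 n
  have h2 : (1 : ℝ) < 1 / gaussIter α n := by
    rw [lt_div_iff₀ hp]; simpa using hl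
  have h3 : ((1 : ℕ) : ℝ) ≤ 1 / gaussIter α n := by exact_mod_cast h2.le
  simpa [cfA] using Nat.le_floor h3

/-- `1/g_n = a_{n+1} + g_{n+1}` -/
lemma gauss_rec (hirr : Irrational α) (h0 : 0 < α) (h1 : α < 1) (n : ℕ) :
    1 / gaussIter α n = (cfA α (n + 1) : ℝ) + gaussIter α (n + 1) := by
  obtain ⟨hi, hp, hl⟩ := gauss_prop hirr h0 h1 n
  have hpos : (0 : ℝ) < 1 / gaussIter α n := by positivity
  have hcast : ((⌊1 / gaussIter α n⌋₊ : ℕ) : ℝ) = (⌊1 / gaussIter α n⌋ : ℝ) :=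
    natCast_floor_eq_intCast_floor hpos.le
  have hdef : gaussIter α (n + 1) = Int.fract (1 / gaussIter α n) := rfl
  rw [hdef, cfA]
  simp only [Nat.add_sub_cancel]
  rw [hcast, Int.fract]
  ring

/-- numerators of the convergents -/
def cfP (α : ℝ) : ℕ → ℕ
  | 0 => 0
  | 1 => 1
  | n + 2 => cfA α (n + 2) * cfP α (n + 1) + cfP α n

/-- `B n = ∏_{k ≤ n} g_k` -/
def cfB (α : ℝ) (n : ℕ) : ℝ := ∏ k ∈ Finset.range (n + 1), gaussIter α k

lemma cfB_succ (n : ℕ) : cfB α (n + 1) = cfB α n * gaussIter α (n + 1) :=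
  Finset.prod_range_succ _ _

lemma cfB_pos (hirr : Irrational α) (h0 : 0 < α) (h1 : α < 1) (n : ℕ) :
    0 < cfB α n :=
  Finset.prod_pos fun k _ => (gauss_prop hirr h0 h1 k).2.1

lemma cfB_lt_one (hirr : Irrational α) (h0 : 0 < α) (h1 : α < 1) (n : ℕ) :
    cfB α n < 1 := by
  induction n with
  | zero => simpa [cfB, show gaussIter α 0 = α from rfl] using h1
  | succ n ih =>
    rw [cfB_succ]
    have h2 := (gauss_prop hirr h0 h1 (n + 1)).2
    nlinarith [cfB_pos hirr h0 h1 n]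

/-- key identity: `q_n α - p_n = (-1)^n B_n` -/
lemma key_identity (hirr : Irrational α) (h0 : 0 < α) (h1 : α < 1) :
    ∀ n, (cfQ α n : ℝ) * α - (cfP α n : ℝ) = (-1 : ℝ) ^ n * cfB α n := by
  intro n
  induction n using Nat.twoStepInduction with
  | zero =>
    have hg0 : gaussIter α 0 = α := rfl
    simp [cfQ, cfP, cfB, hg0]
  | one =>
    have hrec := gauss_rec hirr h0 h1 0
    have hg0 : gaussIter α 0 = α := rfl
    have hα : α ≠ 0 := ne_of_gt h0
    rw [hg0] at hrec
    have hB : cfB α 1 = α * gaussIter α 1 := by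
      simp [cfB, Finset.prod_range_succ, hg0]
    have hQ : (cfQ α 1 : ℝ) = (cfA α 1 : ℝ) := rfl
    have hP : (cfP α 1 : ℝ) = 1 := by norm_num [cfP]
    rw [hQ, hP, hB, pow_one]
    have ha : (cfA α 1 : ℝ) = 1 / α - gaussIter α 1 := by linarith
    rw [ha]
    field_simp
    ring
  | more n ih1 ih2 =>
    have hrec := gauss_rec hirr h0 h1 (n + 1)
    have hgp := (gauss_prop hirr h0 h1 (n + 1)).2.1
    have hq : (cfQ α (n + 2) : ℝ) = (cfA α (n + 2) : ℝ) * (cfQ α (n + 1) : ℝ) + (cfQ α n : ℝ) := by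
      show ((cfA α (n+2) * cfQ α (n+1) + cfQ α n : ℕ) : ℝ) = _
      push_cast; ring
    have hp : (cfP α (n + 2) : ℝ) = (cfA α (n + 2) : ℝ) * (cfP α (n + 1) : ℝ) + (cfP α n : ℝ) := by
      show ((cfA α (n+2) * cfP α (n+1) + cfP α n : ℕ) : ℝ) = _
      push_cast; ring
    have hB2 : cfB α (n + 2) = cfB α (n + 1) * gaussIter α (n + 2) := cfB_succ (n + 1)
    have hB1 : cfB α (n + 1) = cfB α n * gaussIter α (n + 1) := cfB_succ n
    have ha : (cfA α (n + 2) : ℝ) = 1 / gaussIter α (n + 1) - gaussIter α (n + 2) := by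
      linarith [hrec]
    rw [hq, hp]
    have expand : ((cfA α (n+2):ℝ) * (cfQ α (n+1)) + (cfQ α n)) * α
        - ((cfA α (n+2)) * (cfP α (n+1)) + (cfP α n))
        = (cfA α (n+2)) * ((-1)^(n+1) * cfB α (n+1)) + ((-1)^n * cfB α n) := by
      rw [← ih2, ← ih1]; ring
    rw [expand, ha, hB2, hB1]
    have hgne : gaussIter α (n + 1) ≠ 0 := ne_of_gt hgp
    field_simp
    ring

lemma cfQ_pos (hirr : Irrational α) (h0 : 0 < α) (h1 : α < 1) (n : ℕ) :
    0 < cfQ α n := by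
  induction n using Nat.twoStepInduction with
  | zero => simp [cfQ]
  | one => simpa [cfQ] using Nat.lt_of_lt_of_le Nat.zero_lt_one (cfA_ge_one hirr h0 h1 0)
  | more n ih1 ih2 =>
    show 0 < cfA α (n + 2) * cfQ α (n + 1) + cfQ α n
    have := cfA_ge_one hirr h0 h1 (n + 1)
    positivity

lemma cfQ_le_succ (hirr : Irrational α) (h0 : 0 < α) (h1 : α < 1) (n : ℕ) :
    cfQ α n ≤ cfQ α (n + 1) := by
  cases n with
  | zero => simpa [cfQ] using cfA_ge_one hirr h0 h1 0
  | succ n =>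
    show cfQ α (n + 1) ≤ cfA α (n + 2) * cfQ α (n + 1) + cfQ α n
    have h := cfA_ge_one hirr h0 h1 (n + 1)
    calc cfQ α (n + 1) = 1 * cfQ α (n + 1) := (one_mul _).symm
    _ ≤ cfA α (n + 2) * cfQ α (n + 1) + cfQ α n :=
      le_trans (Nat.mul_le_mul_right _ h) (Nat.le_add_right _ _)

/-- determinant identity -/
lemma det_identity : ∀ n : ℕ,
    (cfP α (n+1) : ℤ) * (cfQ α n : ℤ) - (cfP α n : ℤ) * (cfQ α (n+1) : ℤ) = (-1) ^ n := by
  intro n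
  induction n with
  | zero => simp [cfP, cfQ]
  | succ n ih =>
    have hq : (cfQ α (n + 2) : ℤ) = (cfA α (n + 2) : ℤ) * (cfQ α (n + 1) : ℤ) + (cfQ α n : ℤ) := by
      show ((cfA α (n+2) * cfQ α (n+1) + cfQ α n : ℕ) : ℤ) = _
      push_cast; ring
    have hp : (cfP α (n + 2) : ℤ) = (cfA α (n + 2) : ℤ) * (cfP α (n + 1) : ℤ) + (cfP α n : ℤ) := by
      show ((cfA α (n+2) * cfP α (n+1) + cfP α n : ℕ) : ℤ) = _
      push_cast; ring
    rw [pow_succ]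
    rw [hq, hp]
    linear_combination (-1 : ℤ) * ih

/-- Best approximation: for `0 < k < q_{n+1}`, `B_n ≤ |k α - p|`. -/
lemma best_approx (hirr : Irrational α) (h0 : 0 < α) (h1 : α < 1) (n : ℕ)
    (k : ℕ) (hk0 : 0 < k) (hk : k < cfQ α (n + 1)) (p : ℤ) :
    cfB α n ≤ |(k : ℝ) * α - (p : ℝ)| := by
  obtain ⟨e, he_def⟩ : ∃ e : ℤ, e = (-1) ^ n := ⟨_, rfl⟩
  have hdet : (cfP α (n+1) : ℤ) * (cfQ α n : ℤ) - (cfP α n : ℤ) * (cfQ α (n+1) : ℤ) = e := by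
    rw [he_def]; exact det_identity n
  have hee : e * e = 1 := by
    rw [he_def, ← pow_add]
    exact Even.neg_one_pow ⟨n, by ring⟩
  obtain ⟨x, hx_def⟩ : ∃ x : ℤ, x = e * ((k : ℤ) * (cfP α (n+1) : ℤ) - p * (cfQ α (n+1) : ℤ)) :=
    ⟨_, rfl⟩
  obtain ⟨y, hy_def⟩ : ∃ y : ℤ, y = e * (p * (cfQ α n : ℤ) - (k : ℤ) * (cfP α n : ℤ)) :=
    ⟨_, rfl⟩
  have hxq : x * (cfQ α n : ℤ) + y * (cfQ α (n+1) : ℤ) = (k : ℤ) := by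
    rw [hx_def, hy_def]
    linear_combination (e * (k : ℤ)) * hdet + (k : ℤ) * hee
  have hxp : x * (cfP α n : ℤ) + y * (cfP α (n+1) : ℤ) = p := by
    rw [hx_def, hy_def]
    linear_combination (e * p) * hdet + p * hee
  have hkey1 := key_identity hirr h0 h1 n
  have hkey2 := key_identity hirr h0 h1 (n + 1)
  have hBpos1 := cfB_pos hirr h0 h1 n
  have hBpos2 := cfB_pos hirr h0 h1 (n + 1)
  have hqpos1 := cfQ_pos hirr h0 h1 n
  have hqpos2 := cfQ_pos hirr h0 h1 (n + 1)
  -- main expansion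
  have hexp : (k : ℝ) * α - (p : ℝ)
      = (x : ℝ) * ((cfQ α n : ℝ) * α - (cfP α n : ℝ))
        + (y : ℝ) * ((cfQ α (n+1) : ℝ) * α - (cfP α (n+1) : ℝ)) := by
    have h1' : (x : ℝ) * (cfQ α n : ℝ) + (y : ℝ) * (cfQ α (n+1) : ℝ) = (k : ℝ) := by
      exact_mod_cast hxq
    have h2' : (x : ℝ) * (cfP α n : ℝ) + (y : ℝ) * (cfP α (n+1) : ℝ) = (p : ℝ) := by
      exact_mod_cast hxp
    linear_combination h2' - α * h1'
  have habs : |(k : ℝ) * α - (p : ℝ)|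
      = |(x : ℝ) * cfB α n - (y : ℝ) * cfB α (n+1)| := by
    rw [hexp, hkey1, hkey2]
    have hr : (x : ℝ) * ((-1)^n * cfB α n) + (y : ℝ) * ((-1)^(n+1) * cfB α (n+1))
        = (-1 : ℝ)^n * ((x : ℝ) * cfB α n - (y : ℝ) * cfB α (n+1)) := by ring
    rw [hr, abs_mul, abs_pow, abs_neg, abs_one, one_pow, one_mul]
  rw [habs]
  have hkZ : (k : ℤ) < (cfQ α (n+1) : ℤ) := by exact_mod_cast hk
  have hk0Z : (0 : ℤ) < (k : ℤ) := by exact_mod_cast hk0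
  have hq1Z : (1 : ℤ) ≤ (cfQ α n : ℤ) := by exact_mod_cast hqpos1
  have hq2Z : (1 : ℤ) ≤ (cfQ α (n+1) : ℤ) := by exact_mod_cast hqpos2
  have hprod1 : ∀ z : ℤ, 1 ≤ z → (cfQ α (n+1) : ℤ) ≤ z * (cfQ α (n+1) : ℤ) :=
    fun z hz => le_mul_of_one_le_left (by positivity) hz
  have hBleft : ∀ z : ℤ, 1 ≤ z → cfB α n ≤ (z : ℝ) * cfB α n := fun z hz =>
    le_mul_of_one_le_left hBpos1.le (by exact_mod_cast hz)
  have hBleft2 : ∀ z : ℤ, 1 ≤ z → cfB α (n+1) ≤ (z : ℝ) * cfB α (n+1) := fun z hz =>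
    le_mul_of_one_le_left hBpos2.le (by exact_mod_cast hz)
  rcases lt_trichotomy x 0 with hx | hx | hx
  · rcases lt_trichotomy y 0 with hy | hy | hy
    · exfalso
      have p1 : x * (cfQ α n : ℤ) < 0 := mul_neg_of_neg_of_pos hx (by exact_mod_cast hqpos1)
      have p2 : y * (cfQ α (n+1) : ℤ) < 0 := mul_neg_of_neg_of_pos hy (by exact_mod_cast hqpos2)
      omega
    · exfalso
      rw [hy] at hxq; simp only [zero_mul, add_zero] at hxq
      have p1 : x * (cfQ α n : ℤ) < 0 := mul_neg_of_neg_of_pos hx (by exact_mod_cast hqpos1)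
      omega
    · -- x < 0, y > 0
      have hx' : (x : ℝ) ≤ -1 := by exact_mod_cast (by omega : x ≤ -1)
      have hB1 := hBleft (-x) (by omega)
      have hB2 := hBleft2 y (by omega)
      push_cast at hB1
      refine le_trans ?_ (neg_le_abs _)
      linarith
  · exfalso
    rw [hx] at hxq
    simp only [zero_mul, zero_add] at hxq
    rcases lt_trichotomy y 0 with hy | hy | hy
    · have p2 : y * (cfQ α (n+1) : ℤ) < 0 := mul_neg_of_neg_of_pos hy (by exact_mod_cast hqpos2)
      omega
    · rw [hy] at hxq; simp at hxq; omega
    · have := hprod1 y (by omega)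
      omega
  · rcases lt_trichotomy y 0 with hy | hy | hy
    · -- x > 0, y < 0
      have hB1 := hBleft x (by omega)
      have hB2 := hBleft2 (-y) (by omega)
      push_cast at hB2
      refine le_trans ?_ (le_abs_self _)
      linarith
    · -- y = 0
      rw [hy]
      have hB1 := hBleft x (by omega)
      refine le_trans ?_ (le_abs_self _)
      push_cast
      linarith
    · exfalso
      have p1 : 0 < x * (cfQ α n : ℤ) := mul_pos hx (by exact_mod_cast hqpos1)
      have := hprod1 y (by omega)
      omega

/-- fract bounds for `0 < k < q_{n+1}` -/
lemma fract_bounds (hirr : Irrational α) (h0 : 0 < α) (h1 : α < 1) (n : ℕ)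
    (k : ℤ) (hk0 : 0 < k) (hk : k < (cfQ α (n + 1) : ℤ)) :
    cfB α n ≤ Int.fract ((k : ℝ) * α) ∧ Int.fract ((k : ℝ) * α) ≤ 1 - cfB α n := by
  obtain ⟨k, rfl⟩ : ∃ m : ℕ, k = (m : ℤ) := ⟨k.toNat, by omega⟩
  have hk0' : 0 < k := by exact_mod_cast hk0
  have hk' : k < cfQ α (n + 1) := by exact_mod_cast hk
  constructor
  · have := best_approx hirr h0 h1 n k hk0' hk' ⌊(k : ℝ) * α⌋
    rw [abs_of_nonneg (sub_nonneg.mpr (Int.floor_le _))] at this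
    rw [Int.fract]
    push_cast at this ⊢
    linarith
  · have := best_approx hirr h0 h1 n k hk0' hk' (⌊(k : ℝ) * α⌋ + 1)
    have hlt : (k : ℝ) * α - ((⌊(k : ℝ) * α⌋ : ℝ) + 1) < 0 := by
      have := Int.lt_floor_add_one ((k : ℝ) * α)
      linarith
    rw [abs_of_neg (by push_cast at hlt ⊢; linarith)] at this
    rw [Int.fract]
    push_cast at this ⊢
    linarith

/-- value of `fract (q_n α)` -/
lemma fract_qa (hirr : Irrational α) (h0 : 0 < α) (h1 : α < 1) (n : ℕ) :
    Int.fract ((cfQ α n : ℝ) * α)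
      = if Even n then cfB α n else 1 - cfB α n := by
  have hkey := key_identity hirr h0 h1 n
  have hB0 := cfB_pos hirr h0 h1 n
  have hB1 := cfB_lt_one hirr h0 h1 n
  rcases Nat.even_or_odd n with he | ho
  · rw [if_pos he]
    have : (cfQ α n : ℝ) * α = (cfP α n : ℤ) + cfB α n := by
      rw [he.neg_one_pow] at hkey; push_cast; linarith
    rw [this, Int.fract_intCast_add, Int.fract_eq_self.mpr ⟨hB0.le, hB1⟩]
  · rw [if_neg (Nat.not_even_iff_odd.mpr ho)]
    have : (cfQ α n : ℝ) * α = (((cfP α n : ℤ) - 1 : ℤ) : ℝ) + (1 - cfB α n) := by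
      rw [ho.neg_one_pow] at hkey; push_cast; linarith
    rw [this, Int.fract_intCast_add, Int.fract_eq_self.mpr ⟨by linarith, by linarith⟩]

/-- arithmetic: `a_{n+1} * a_n * q_{n-1} ≤ q_{n+1}` for `n ≥ 1` -/
lemma cfA_mul_le (hirr : Irrational α) (h0 : 0 < α) (h1 : α < 1) (n : ℕ) (hn : 1 ≤ n) :
    cfA α (n + 1) * cfA α n * cfQ α (n - 1) ≤ cfQ α (n + 1) := by
  obtain ⟨m, rfl⟩ : ∃ m, n = m + 1 := ⟨n - 1, by omega⟩
  simp only [Nat.add_sub_cancel]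
  have h2 : cfA α (m + 1) * cfQ α m ≤ cfQ α (m + 1) := by
    cases m with
    | zero => simp [cfQ]
    | succ j =>
      show cfA α (j + 2) * cfQ α (j + 1) ≤ cfA α (j + 2) * cfQ α (j + 1) + cfQ α j
      exact Nat.le_add_right _ _
  calc cfA α (m + 2) * cfA α (m + 1) * cfQ α m
      = cfA α (m + 2) * (cfA α (m + 1) * cfQ α m) := by ring
    _ ≤ cfA α (m + 2) * cfQ α (m + 1) := Nat.mul_le_mul_left _ h2
    _ ≤ cfA α (m + 2) * cfQ α (m + 1) + cfQ α m := Nat.le_add_right _ _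
    _ = cfQ α (m + 2) := rfl

/-! ### Part 1: rotation number comparison lemmas -/

section Rot

variable (H : CircleHomeo)

lemma lift_add_int (x : ℝ) (m : ℤ) : H.lift (x + m) = H.lift x + m := by
  induction m using Int.induction_on with
  | zero => simp
  | succ k ih =>
    have h2 := H.lift_add_one (x + (((k : ℤ) : ℝ)))
    have e1 : x + (((k : ℤ) + 1 : ℤ) : ℝ) = (x + (((k : ℤ)) : ℝ)) + 1 := by push_cast; ring
    rw [e1, h2, ih]
    push_cast
    ring
  | pred k ih =>
    have h2 := H.lift_add_one (x + (((-(k : ℤ) - 1 : ℤ)) : ℝ))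
    have e1 : (x + (((-(k : ℤ) - 1 : ℤ)) : ℝ)) + 1 = x + (((-(k : ℤ) : ℤ)) : ℝ) := by
      push_cast; ring
    rw [e1, ih] at h2
    have e2 : (((-(k : ℤ) : ℤ)) : ℝ) = (((-(k : ℤ) - 1 : ℤ)) : ℝ) + 1 := by push_cast; ring
    rw [e2] at h2
    linarith

lemma iter_add_int (k : ℕ) (x : ℝ) (m : ℤ) :
    H.lift^[k] (x + m) = H.lift^[k] x + m := by
  induction k generalizing x with
  | zero => simp
  | succ k ih =>
    rw [Function.iterate_succ_apply, Function.iterate_succ_apply, lift_add_int, ih]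

lemma iter_strictMono (k : ℕ) : StrictMono H.lift^[k] :=
  H.lift_strictMono.iterate k

variable {β : ℝ}
  (htend : ∀ x : ℝ, Filter.Tendsto (fun n : ℕ => H.lift^[n] x / n) Filter.atTop (nhds β))

include htend

lemma kcl_ge (k : ℕ) (p : ℤ) (x : ℝ) (h : x + p ≤ H.lift^[k] x) : (p : ℝ) ≤ k * β := by
  rcases Nat.eq_zero_or_pos k with hk | hk
  · subst hk
    simp only [Function.iterate_zero, id] at h
    have : (p : ℝ) ≤ 0 := by linarith
    simpa using this
  · have step : ∀ m : ℕ, x + (m * p : ℤ) ≤ H.lift^[k * m] x := by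
      intro m
      induction m with
      | zero => simp
      | succ m ih =>
        have hmul : k * (m + 1) = k * m + k := by ring
        rw [hmul, Function.iterate_add_apply]
        calc x + ((m + 1 : ℕ) * p : ℤ) = (x + p) + (m * p : ℤ) := by push_cast; ring
          _ ≤ H.lift^[k] x + (m * p : ℤ) := by linarith
          _ = H.lift^[k] (x + (m * p : ℤ)) := (iter_add_int H k x _).symm
          _ ≤ H.lift^[k] (H.lift^[k * m] x) := (iter_strictMono H k).monotone ih
          _ = H.lift^[k * m] (H.lift^[k] x) := by
              rw [← Function.iterate_add_apply, ← Function.iterate_add_apply, Nat.add_comm]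
    -- pass to the limit
    have hku : Filter.Tendsto (fun m : ℕ => k * m) Filter.atTop Filter.atTop := by
      apply Filter.tendsto_atTop_atTop.mpr
      intro b
      exact ⟨b, fun a ha => le_trans ha (Nat.le_mul_of_pos_left a hk)⟩
    have hu : Filter.Tendsto (fun m : ℕ => H.lift^[k * m] x / (k * m : ℕ)) Filter.atTop (nhds β) :=
      (htend x).comp hku
    have hv : Filter.Tendsto (fun m : ℕ => (x + (m * p : ℤ)) / (k * m : ℕ)) Filter.atTop
        (nhds ((p : ℝ) / k)) := by
      have hev : (fun m : ℕ => (x / m + p) / k) =ᶠ[Filter.atTop]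
          (fun m : ℕ => (x + (m * p : ℤ)) / (k * m : ℕ)) := by
        filter_upwards [Filter.eventually_ge_atTop 1] with m hm
        have hm' : (m : ℝ) ≠ 0 := by positivity
        have hk' : (k : ℝ) ≠ 0 := by positivity
        push_cast
        field_simp
      refine Filter.Tendsto.congr' hev ?_
      have h1 : Filter.Tendsto (fun m : ℕ => x / m) Filter.atTop (nhds 0) :=
        tendsto_const_div_atTop_nhds_zero_nat x
      have : Filter.Tendsto (fun m : ℕ => (x / m + p) / k) Filter.atTop
          (nhds ((0 + p) / k)) := (h1.add_const _).div_const _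
      simpa using this
    have hle : (p : ℝ) / k ≤ β := by
      refine le_of_tendsto_of_tendsto' hv hu fun m => ?_
      rcases Nat.eq_zero_or_pos m with hm | hm
      · subst hm; simp
      · have hkm : (0 : ℝ) < ((k * m : ℕ) : ℝ) := by positivity
        gcongr
        exact step m
    rw [div_le_iff₀ (by positivity : (0:ℝ) < (k:ℝ))] at hle
    linarith

lemma kcl_le (k : ℕ) (p : ℤ) (x : ℝ) (h : H.lift^[k] x ≤ x + p) : (k : ℝ) * β ≤ p := by
  rcases Nat.eq_zero_or_pos k with hk | hk
  · subst hk
    simp only [Function.iterate_zero, id] at h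
    have : (0 : ℝ) ≤ (p : ℝ) := by linarith
    simpa using this
  · have step : ∀ m : ℕ, H.lift^[k * m] x ≤ x + (m * p : ℤ) := by
      intro m
      induction m with
      | zero => simp
      | succ m ih =>
        have hmul : k * (m + 1) = k * m + k := by ring
        rw [hmul, Function.iterate_add_apply]
        calc H.lift^[k * m] (H.lift^[k] x) = H.lift^[k] (H.lift^[k * m] x) := by
              rw [← Function.iterate_add_apply, ← Function.iterate_add_apply, Nat.add_comm]
          _ ≤ H.lift^[k] (x + (m * p : ℤ)) := (iter_strictMono H k).monotone ih
          _ = H.lift^[k] x + (m * p : ℤ) := iter_add_int H k x _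
          _ ≤ (x + p) + (m * p : ℤ) := by linarith
          _ = x + ((m + 1 : ℕ) * p : ℤ) := by push_cast; ring
    have hku : Filter.Tendsto (fun m : ℕ => k * m) Filter.atTop Filter.atTop := by
      apply Filter.tendsto_atTop_atTop.mpr
      intro b
      exact ⟨b, fun a ha => le_trans ha (Nat.le_mul_of_pos_left a hk)⟩
    have hu : Filter.Tendsto (fun m : ℕ => H.lift^[k * m] x / (k * m : ℕ)) Filter.atTop (nhds β) :=
      (htend x).comp hku
    have hv : Filter.Tendsto (fun m : ℕ => (x + (m * p : ℤ)) / (k * m : ℕ)) Filter.atTop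
        (nhds ((p : ℝ) / k)) := by
      have hev : (fun m : ℕ => (x / m + p) / k) =ᶠ[Filter.atTop]
          (fun m : ℕ => (x + (m * p : ℤ)) / (k * m : ℕ)) := by
        filter_upwards [Filter.eventually_ge_atTop 1] with m hm
        have hm' : (m : ℝ) ≠ 0 := by positivity
        have hk' : (k : ℝ) ≠ 0 := by positivity
        push_cast
        field_simp
      refine Filter.Tendsto.congr' hev ?_
      have h1 : Filter.Tendsto (fun m : ℕ => x / m) Filter.atTop (nhds 0) :=
        tendsto_const_div_atTop_nhds_zero_nat x
      have : Filter.Tendsto (fun m : ℕ => (x / m + p) / k) Filter.atTop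
          (nhds ((0 + p) / k)) := (h1.add_const _).div_const _
      simpa using this
    have hle : β ≤ (p : ℝ) / k := by
      refine le_of_tendsto_of_tendsto' hu hv fun m => ?_
      rcases Nat.eq_zero_or_pos m with hm | hm
      · subst hm; simp
      · have hkm : (0 : ℝ) < ((k * m : ℕ) : ℝ) := by positivity
        gcongr
        exact step m
    rw [le_div_iff₀ (by positivity : (0:ℝ) < (k:ℝ))] at hle
    linarith

variable {α : ℝ} (hirr : Irrational α) (hfr : Int.fract β = α)

include hirr hfr

lemma beta_irr : Irrational β := by
  have : β = ⌊β⌋ + Int.fract β := by rw [Int.fract]; ring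
  rw [this, hfr]
  exact hirr.intCast_add _

lemma kbeta_ne (k : ℕ) (hk : 0 < k) (p : ℤ) : (k : ℝ) * β ≠ p := by
  have hb := beta_irr H htend hirr hfr
  have : Irrational ((k : ℝ) * β) := by
    rw [show ((k:ℝ) * β) = β * (k:ℕ) by ring]
    exact hb.mul_natCast (by omega)
  exact this.ne_int p

lemma kcl_lt_iff (k : ℕ) (hk : 0 < k) (p : ℤ) (x : ℝ) :
    H.lift^[k] x < x + p ↔ (k : ℝ) * β < p := by
  constructor
  · intro h
    have := kcl_le H htend k p x h.le
    exact lt_of_le_of_ne this (kbeta_ne H htend hirr hfr k hk p)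
  · intro h
    by_contra hcon
    push_neg at hcon
    have := kcl_ge H htend k p x hcon
    linarith

lemma kcl_le_iff (k : ℕ) (hk : 0 < k) (p : ℤ) (x : ℝ) :
    H.lift^[k] x ≤ x + p ↔ (k : ℝ) * β ≤ p := by
  constructor
  · exact kcl_le H htend k p x
  · intro h
    by_contra hcon
    push_neg at hcon
    have := kcl_ge H htend k p x hcon.le
    have hne := kbeta_ne H htend hirr hfr k hk p
    rcases lt_or_eq_of_le this with h2 | h2
    · linarith
    · exact hne h2.symm

lemma diff_lt_iff (s t : ℕ) (c : ℤ) (x : ℝ) :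
    H.lift^[t] x - H.lift^[s] x < c ↔ ((t : ℝ) - (s : ℝ)) * β < c := by
  rcases lt_trichotomy s t with h | h | h
  · have hk : 0 < t - s := by omega
    have hit : H.lift^[t] x = H.lift^[t - s] (H.lift^[s] x) := by
      conv_lhs => rw [show t = (t - s) + s by omega]
      exact Function.iterate_add_apply _ _ _ _
    have hiff := kcl_lt_iff H htend hirr hfr (t - s) hk c (H.lift^[s] x)
    rw [← hit] at hiff
    have hcast : ((t - s : ℕ) : ℝ) = (t : ℝ) - (s : ℝ) := by
      exact_mod_cast Nat.cast_sub h.le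
    rw [hcast] at hiff
    constructor
    · intro hlt; exact hiff.mp (by linarith)
    · intro hlt; have := hiff.mpr hlt; linarith
  · subst h; simp
  · have hk : 0 < s - t := by omega
    have hit : H.lift^[s] x = H.lift^[s - t] (H.lift^[t] x) := by
      conv_lhs => rw [show s = (s - t) + t by omega]
      exact Function.iterate_add_apply _ _ _ _
    have hiff := kcl_le_iff H htend hirr hfr (s - t) hk (-c) (H.lift^[t] x)
    rw [← hit] at hiff
    have hcast : ((s - t : ℕ) : ℝ) = (s : ℝ) - (t : ℝ) := by
      exact_mod_cast Nat.cast_sub h.le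
    rw [hcast] at hiff
    constructor
    · intro hlt
      by_contra hcon
      push_neg at hcon
      have h2 : ((s : ℝ) - t) * β ≤ ((-c : ℤ) : ℝ) := by push_cast; nlinarith
      have := hiff.mpr h2
      push_cast at this
      linarith
    · intro hlt
      by_contra hcon
      push_neg at hcon
      have h3 : H.lift^[s] x ≤ H.lift^[t] x + ((-c : ℤ) : ℝ) := by push_cast; linarith
      have := hiff.mp h3
      push_cast at this
      nlinarith

lemma floor_diff (s t : ℕ) (x : ℝ) :
    ⌊H.lift^[t] x - H.lift^[s] x⌋ = ⌊((t : ℝ) - (s : ℝ)) * β⌋ := by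
  rw [Int.floor_eq_iff]
  constructor
  · by_contra hcon
    push_neg at hcon
    have := (diff_lt_iff H htend hirr hfr s t ⌊((t : ℝ) - (s : ℝ)) * β⌋ x).mp hcon
    exact absurd this (not_lt.mpr (Int.floor_le _))
  · have h2 : ((t : ℝ) - (s : ℝ)) * β < (⌊((t : ℝ) - (s : ℝ)) * β⌋ + 1 : ℤ) := by
      push_cast
      exact Int.lt_floor_add_one _
    have := (diff_lt_iff H htend hirr hfr s t (⌊((t : ℝ) - (s : ℝ)) * β⌋ + 1) x).mpr h2
    push_cast at this ⊢
    linarith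

lemma diff_ne_int (s t : ℕ) (hst : s ≠ t) (c : ℤ) (x : ℝ) :
    H.lift^[t] x - H.lift^[s] x ≠ c := by
  -- reduce to the case s < t
  have main : ∀ s t : ℕ, s < t → ∀ c : ℤ, H.lift^[t] x - H.lift^[s] x ≠ c := by
    intro s t h c heq
    have hit : H.lift^[t] x = H.lift^[t - s] (H.lift^[s] x) := by
      conv_lhs => rw [show t = (t - s) + s by omega]
      exact Function.iterate_add_apply _ _ _ _
    rw [hit] at heq
    have h1 := kcl_ge H htend (t - s) c (H.lift^[s] x) (by linarith [heq.ge])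
    have h2 := kcl_le H htend (t - s) c (H.lift^[s] x) (by linarith [heq.le])
    exact kbeta_ne H htend hirr hfr (t - s) (by omega) c (le_antisymm h2 h1)
  rcases lt_or_gt_of_ne hst with h | h
  · exact main s t h c
  · intro heq
    exact main t s h (-c) (by push_cast; linarith)

lemma fract_diff_pos (s t : ℕ) (hst : s ≠ t) (x : ℝ) :
    0 < Int.fract (H.lift^[t] x - H.lift^[s] x) := by
  rcases eq_or_lt_of_le (Int.fract_nonneg (H.lift^[t] x - H.lift^[s] x)) with h | h
  · exfalso
    have h0 : Int.fract (H.lift^[t] x - H.lift^[s] x) = 0 := h.symm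
    rw [Int.fract] at h0
    have : H.lift^[t] x - H.lift^[s] x = (⌊H.lift^[t] x - H.lift^[s] x⌋ : ℝ) := by linarith
    exact diff_ne_int H htend hirr hfr s t hst _ x this
  · exact h

lemma fract_mul_beta (m : ℤ) : Int.fract ((m : ℝ) * β) = Int.fract ((m : ℝ) * α) := by
  have hb : β - (⌊β⌋ : ℝ) = α := by rw [← hfr, Int.fract]
  have heq : (m : ℝ) * β = (m : ℝ) * α + ((m * ⌊β⌋ : ℤ) : ℝ) := by
    push_cast
    linear_combination (m : ℝ) * hb
  rw [heq, Int.fract_add_intCast]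

/-- Master comparison lemma -/
lemma fract_master (s j l : ℕ) (x : ℝ) :
    (Int.fract (H.lift^[j] x - H.lift^[s] x) < Int.fract (H.lift^[l] x - H.lift^[s] x))
      ↔ Int.fract ((((j : ℤ) - (s : ℤ)) : ℝ) * α) < Int.fract ((((l : ℤ) - (s : ℤ)) : ℝ) * α) := by
  have e1 : Int.fract (H.lift^[j] x - H.lift^[s] x)
      = (H.lift^[j] x - H.lift^[s] x) - ⌊((j : ℝ) - (s : ℝ)) * β⌋ := by
    rw [Int.fract, floor_diff H htend hirr hfr]
  have e2 : Int.fract (H.lift^[l] x - H.lift^[s] x)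
      = (H.lift^[l] x - H.lift^[s] x) - ⌊((l : ℝ) - (s : ℝ)) * β⌋ := by
    rw [Int.fract, floor_diff H htend hirr hfr]
  have hj := fract_mul_beta H htend hirr hfr ((j : ℤ) - (s : ℤ))
  have hl := fract_mul_beta H htend hirr hfr ((l : ℤ) - (s : ℤ))
  push_cast at hj hl
  have e3 : Int.fract ((((j : ℤ) - (s : ℤ)) : ℝ) * β)
      = ((j : ℝ) - (s : ℝ)) * β - ⌊((j : ℝ) - (s : ℝ)) * β⌋ := by
    rw [Int.fract]
    norm_num
  have e4 : Int.fract ((((l : ℤ) - (s : ℤ)) : ℝ) * β)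
      = ((l : ℝ) - (s : ℝ)) * β - ⌊((l : ℝ) - (s : ℝ)) * β⌋ := by
    rw [Int.fract]
    norm_num
  push_cast at e3 e4 ⊢
  rw [e1, e2, ← hj, ← hl, e3, e4]
  have hdiff := diff_lt_iff H htend hirr hfr l j
      (⌊((j : ℝ) - (s : ℝ)) * β⌋ - ⌊((l : ℝ) - (s : ℝ)) * β⌋) x
  push_cast at hdiff
  constructor
  · intro hlt
    have := hdiff.mp (by linarith)
    nlinarith [this]
  · intro hlt
    have := hdiff.mpr (by nlinarith)
    linarith

end Rot

/-! ### Part 2: circle glue -/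

section Circle

lemma coe_eq_of_sub_int (x y : ℝ) (m : ℤ) (h : x - y = m) : (x : Circle1) = (y : Circle1) := by
  have : x = y + m := by linarith
  subst this
  have : ((m : ℝ) : Circle1) = 0 := by
    rw [AddCircle.coe_eq_zero_iff]
    exact ⟨m, by simp⟩
  rw [AddCircle.coe_add, this, add_zero]

lemma sub_int_of_coe_eq (x y : ℝ) (h : (x : Circle1) = (y : Circle1)) : ∃ m : ℤ, x - y = m := by
  have h2 : ((x - y : ℝ) : Circle1) = 0 := by
    rw [AddCircle.coe_sub, h, sub_self]
  rw [AddCircle.coe_eq_zero_iff] at h2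
  obtain ⟨m, hm⟩ := h2
  exact ⟨m, by simpa using hm.symm⟩

lemma circDisp_coe (u v : ℝ) : circDisp (u : Circle1) (v : Circle1) = Int.fract (v - u) := by
  unfold circDisp
  have : ((v : Circle1) - (u : Circle1)) = ((v - u : ℝ) : Circle1) := by
    rw [AddCircle.coe_sub]
  rw [this]
  have := AddCircle.coe_equivIco_mk_apply (1 : ℝ) (v - u)
  simpa using this

lemma mem_arcIco_iff (a b z : Circle1) : z ∈ arcIco a b ↔ circDisp a z < circDisp a b :=
  Iff.rfl

variable (H : CircleHomeo)

lemma toFun_coe (u : ℝ) : H.toFun (u : Circle1) = ((H.lift u : ℝ) : Circle1) :=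
  H.lift_proj u

lemma iter_toFun_coe (k : ℕ) (u : ℝ) :
    H.toFun^[k] (u : Circle1) = ((H.lift^[k] u : ℝ) : Circle1) := by
  induction k with
  | zero => simp
  | succ k ih =>
    rw [Function.iterate_succ_apply', Function.iterate_succ_apply', ih, toFun_coe]

lemma fract_lift_eq (u v : ℝ) :
    Int.fract (H.lift v - H.lift u) = H.lift (u + Int.fract (v - u)) - H.lift u := by
  have hv : v = (u + Int.fract (v - u)) + (⌊v - u⌋ : ℤ) := by
    rw [Int.fract]; push_cast; ring
  have h1 : H.lift v = H.lift (u + Int.fract (v - u)) + (⌊v - u⌋ : ℤ) := by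
    conv_lhs => rw [hv]
    exact lift_add_int H _ _
  rw [h1]
  have h2 : H.lift (u + Int.fract (v - u)) + (⌊v - u⌋ : ℤ) - H.lift u
      = (H.lift (u + Int.fract (v - u)) - H.lift u) + (⌊v - u⌋ : ℤ) := by ring
  rw [h2, Int.fract_add_intCast]
  apply Int.fract_eq_self.mpr
  constructor
  · have : u ≤ u + Int.fract (v - u) := by
      have := Int.fract_nonneg (v - u); linarith
    have := H.lift_strictMono.monotone this
    linarith
  · have hlt : u + Int.fract (v - u) < u + 1 := by
      have := Int.fract_lt_one (v - u); linarith
    have := H.lift_strictMono hlt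
    rw [H.lift_add_one] at this
    linarith

lemma fract_lift_lt_iff (u v w : ℝ) :
    Int.fract (H.lift v - H.lift u) < Int.fract (H.lift w - H.lift u)
      ↔ Int.fract (v - u) < Int.fract (w - u) := by
  rw [fract_lift_eq, fract_lift_eq]
  constructor
  · intro h
    have h2 : H.lift (u + Int.fract (v - u)) < H.lift (u + Int.fract (w - u)) := by linarith
    have := H.lift_strictMono.lt_iff_lt.mp h2
    linarith
  · intro h
    have h2 : u + Int.fract (v - u) < u + Int.fract (w - u) := by linarith
    have := H.lift_strictMono h2
    linarith

lemma coe_surj : Function.Surjective (fun r : ℝ => (r : Circle1)) := by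
  intro z
  obtain ⟨r, hr⟩ := Quot.exists_rep z
  exact ⟨r, hr⟩

lemma toFun_mem_arcIco_iff (a b z : Circle1) :
    H.toFun z ∈ arcIco (H.toFun a) (H.toFun b) ↔ z ∈ arcIco a b := by
  obtain ⟨u, rfl⟩ := coe_surj a
  obtain ⟨v, rfl⟩ := coe_surj b
  obtain ⟨w, rfl⟩ := coe_surj z
  rw [mem_arcIco_iff, mem_arcIco_iff, toFun_coe, toFun_coe, toFun_coe,
    circDisp_coe, circDisp_coe, circDisp_coe, circDisp_coe]
  exact fract_lift_lt_iff H u w v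

lemma toFun_surj : Function.Surjective H.toFun := H.toHomeo.surjective

lemma image_arcIco (a b : Circle1) :
    H.toFun '' arcIco a b = arcIco (H.toFun a) (H.toFun b) := by
  ext z
  constructor
  · rintro ⟨w, hw, rfl⟩
    exact (toFun_mem_arcIco_iff H a b w).mpr hw
  · intro hz
    obtain ⟨w, rfl⟩ := toFun_surj H z
    exact ⟨w, (toFun_mem_arcIco_iff H a b w).mp hz, rfl⟩

lemma image_iter_arcIco (k : ℕ) (a b : Circle1) :
    H.toFun^[k] '' arcIco a b = arcIco (H.toFun^[k] a) (H.toFun^[k] b) := by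
  induction k with
  | zero => simp
  | succ k ih =>
    have h1 : H.toFun^[k + 1] '' arcIco a b = H.toFun '' (H.toFun^[k] '' arcIco a b) := by
      rw [← Set.image_comp]
      congr 1
      exact (Function.iterate_succ' H.toFun k) ▸ rfl
    rw [h1, ih, image_arcIco, ← Function.iterate_succ_apply' H.toFun k a,
      ← Function.iterate_succ_apply' H.toFun k b]

lemma measurable_circDisp (a : Circle1) : Measurable (fun z => circDisp a z) := by
  have heq : (fun z : Circle1 => circDisp a z)
      = (fun z : Circle1 => (((AddCircle.measurableEquivIco 1 (0:ℝ)) (z - a) : Set.Ico (0:ℝ) (0+1)) : ℝ)) := rfl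
  rw [heq]
  apply Measurable.comp measurable_subtype_coe
  exact (AddCircle.measurableEquivIco 1 0).measurable.comp
    ((continuous_id.sub continuous_const).measurable)

lemma measurableSet_arcIco (a b : Circle1) : MeasurableSet (arcIco a b) :=
  (measurable_circDisp a) measurableSet_Iio

lemma circDisp_eq_zero_iff (a c : Circle1) : circDisp a c = 0 ↔ a = c := by
  obtain ⟨u, rfl⟩ := coe_surj a
  obtain ⟨w, rfl⟩ := coe_surj c
  rw [circDisp_coe]
  constructor
  · intro h
    rw [Int.fract] at h
    exact (coe_eq_of_sub_int w u ⌊w - u⌋ (by linarith)).symm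
  · intro h
    obtain ⟨m, hm⟩ := sub_int_of_coe_eq u w h
    have : w - u = (-m : ℤ) := by push_cast; linarith
    rw [this, Int.fract_intCast]

lemma circDisp_nonneg (a c : Circle1) : 0 ≤ circDisp a c := by
  obtain ⟨u, rfl⟩ := coe_surj a
  obtain ⟨w, rfl⟩ := coe_surj c
  rw [circDisp_coe]
  exact Int.fract_nonneg _

lemma circDisp_lt_one (a c : Circle1) : circDisp a c < 1 := by
  obtain ⟨u, rfl⟩ := coe_surj a
  obtain ⟨w, rfl⟩ := coe_surj c
  rw [circDisp_coe]
  exact Int.fract_lt_one _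

lemma circDisp_pos_of_ne {a c : Circle1} (h : a ≠ c) : 0 < circDisp a c :=
  lt_of_le_of_ne (circDisp_nonneg a c) (fun h0 => h ((circDisp_eq_zero_iff a c).mp h0.symm))

lemma circDisp_rev {a c : Circle1} (h : a ≠ c) : circDisp c a = 1 - circDisp a c := by
  obtain ⟨u, rfl⟩ := coe_surj a
  obtain ⟨w, rfl⟩ := coe_surj c
  rw [circDisp_coe, circDisp_coe]
  have hne : Int.fract (w - u) ≠ 0 := by
    intro h0
    exact h ((circDisp_eq_zero_iff _ _).mp (by rw [circDisp_coe]; exact h0))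
  have : u - w = -(w - u) := by ring
  rw [this, Int.fract_neg hne]

lemma left_mem_arcIco {a b : Circle1} (hab : a ≠ b) : a ∈ arcIco a b := by
  rw [mem_arcIco_iff]
  have : circDisp a a = 0 := (circDisp_eq_zero_iff a a).mpr rfl
  rw [this]
  exact circDisp_pos_of_ne hab

lemma fract_sub_fract (t u w : ℝ) :
    Int.fract (t - w) = Int.fract (Int.fract (t - u) - Int.fract (w - u)) := by
  have heq : t - w = (Int.fract (t - u) - Int.fract (w - u)) + ((⌊t - u⌋ - ⌊w - u⌋ : ℤ) : ℝ) := by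
    rw [Int.fract, Int.fract]; push_cast; ring
  rw [heq, Int.fract_add_intCast]

lemma circDisp_cocycle {a b z : Circle1} (hab : a ≠ b) (h : circDisp a b ≤ circDisp a z) :
    circDisp b z = circDisp a z - circDisp a b := by
  obtain ⟨u, rfl⟩ := coe_surj a
  obtain ⟨v, rfl⟩ := coe_surj b
  obtain ⟨t, rfl⟩ := coe_surj z
  simp only [circDisp_coe] at h ⊢
  rw [fract_sub_fract t u v]
  apply Int.fract_eq_self.mpr
  constructor
  · linarith
  · have h1 := Int.fract_lt_one (t - u)
    have h2 := Int.fract_nonneg (v - u)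
    linarith

lemma arc_disjoint_crit {a b c d : Circle1} (hac : a ≠ c)
    (h1 : circDisp a b ≤ circDisp a c) (h2 : circDisp c d ≤ circDisp c a) :
    arcIco a b ∩ arcIco c d = ∅ := by
  rw [Set.eq_empty_iff_forall_notMem]
  rintro z ⟨hz1, hz2⟩
  rw [mem_arcIco_iff] at hz1 hz2
  have hrev := circDisp_rev hac
  -- displacement from c to z
  have hkey : circDisp c z = circDisp a z + (1 - circDisp a c) := by
    obtain ⟨u, rfl⟩ := coe_surj a
    obtain ⟨w, rfl⟩ := coe_surj c
    obtain ⟨t, rfl⟩ := coe_surj z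
    simp only [circDisp_coe] at h1 hz1 hz2 h2 hrev ⊢
    rw [fract_sub_fract t u w]
    have hs : Int.fract (t - u) < Int.fract (w - u) := lt_of_lt_of_le hz1 h1
    have hf0 : 0 ≤ Int.fract (t - u) := Int.fract_nonneg _
    have hf1 : Int.fract (w - u) < 1 := Int.fract_lt_one _
    have heq : Int.fract (t - u) - Int.fract (w - u)
        = (Int.fract (t - u) + (1 - Int.fract (w - u))) + ((-1 : ℤ) : ℝ) := by
      push_cast; ring
    rw [heq, Int.fract_add_intCast]
    apply Int.fract_eq_self.mpr
    constructor
    · linarith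
    · linarith
  rw [hkey] at hz2
  have := circDisp_nonneg a z
  -- hz2 : circDisp a z + (1 - circDisp a c) < circDisp c d ≤ circDisp c a = 1 - circDisp a c
  rw [hrev] at h2
  linarith [lt_of_lt_of_le hz2 h2]

end Circle

/-! ### Part 4: main assembly -/

section Main

variable (H : CircleHomeo) {α β : ℝ} (x0 : Circle1)
variable (hirr : Irrational α) (h0 : 0 < α) (h1 : α < 1)
variable (htend : ∀ x : ℝ, Filter.Tendsto (fun n : ℕ => H.lift^[n] x / n) Filter.atTop (nhds β))
variable (hfr : Int.fract β = α)

lemma exists_rep (z : Circle1) : ∃ r : ℝ, (r : Circle1) = z := coe_surj z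

lemma pt_coe (ξ0 : ℝ) (hξ0 : (ξ0 : Circle1) = x0) (k : ℕ) :
    DynPart.pt H x0 k = ((H.lift^[k] ξ0 : ℝ) : Circle1) := by
  rw [DynPart.pt, ← hξ0, iter_toFun_coe]

include hirr htend hfr in
lemma pt_lt_iff (i j l : ℕ) :
    (circDisp (DynPart.pt H x0 i) (DynPart.pt H x0 j)
      < circDisp (DynPart.pt H x0 i) (DynPart.pt H x0 l))
    ↔ Int.fract ((((j : ℤ) - (i : ℤ)) : ℝ) * α)
      < Int.fract ((((l : ℤ) - (i : ℤ)) : ℝ) * α) := by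
  obtain ⟨ξ0, hξ0⟩ := exists_rep x0
  rw [pt_coe H x0 ξ0 hξ0 i, pt_coe H x0 ξ0 hξ0 j, pt_coe H x0 ξ0 hξ0 l,
    circDisp_coe, circDisp_coe]
  exact fract_master H htend hirr hfr i j l ξ0

include hirr htend hfr in
lemma pt_ne (i j : ℕ) (hij : i ≠ j) : DynPart.pt H x0 i ≠ DynPart.pt H x0 j := by
  obtain ⟨ξ0, hξ0⟩ := exists_rep x0
  rw [pt_coe H x0 ξ0 hξ0 i, pt_coe H x0 ξ0 hξ0 j]
  intro heq
  obtain ⟨m, hm⟩ := sub_int_of_coe_eq _ _ heq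
  exact (diff_ne_int H htend hirr hfr j i (Ne.symm hij) m ξ0) hm

lemma Ini_eq (m i : ℕ) :
    DynPart.Ini H α x0 m i
      = if Even m then arcIco (DynPart.pt H x0 i) (DynPart.pt H x0 (i + cfQ α m))
        else arcIco (DynPart.pt H x0 (i + cfQ α m)) (DynPart.pt H x0 i) := by
  have hpt : ∀ k : ℕ, H.toFun^[i] (DynPart.pt H x0 k) = DynPart.pt H x0 (i + k) := by
    intro k
    rw [DynPart.pt, DynPart.pt, ← Function.iterate_add_apply]
  have hx0 : x0 = DynPart.pt H x0 0 := rfl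
  rcases Nat.even_or_odd m with he | ho
  · rw [if_pos he]
    rw [DynPart.Ini, DynPart.In, if_pos he, image_iter_arcIco, hpt]
    rfl
  · rw [if_neg (Nat.not_even_iff_odd.mpr ho)]
    rw [DynPart.Ini, DynPart.In, if_neg (Nat.not_even_iff_odd.mpr ho),
      image_iter_arcIco, hpt]
    rfl

include hirr in
lemma fract_int_ne_zero (m : ℤ) (hm : m ≠ 0) : Int.fract ((m : ℝ) * α) ≠ 0 := by
  have : Irrational ((m : ℝ) * α) := by
    rw [mul_comm]
    exact hirr.mul_intCast hm
  exact (irrational_fract this).ne_zero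

include hirr h0 h1 in
lemma fract_neg_qm (m : ℕ) :
    Int.fract ((-(cfQ α m : ℤ) : ℝ) * α)
      = if Even m then 1 - cfB α m else cfB α m := by
  have hq := cfQ_pos hirr h0 h1 m
  have hne : Int.fract (((cfQ α m : ℤ) : ℝ) * α) ≠ 0 :=
    fract_int_ne_zero (α := α) hirr (cfQ α m) (by exact_mod_cast hq.ne')
  rw [show (-((cfQ α m : ℤ) : ℝ)) * α = -((((cfQ α m : ℤ)) : ℝ) * α) from by ring,
    Int.fract_neg hne]
  have := fract_qa hirr h0 h1 m
  push_cast at this ⊢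
  rw [this]
  rcases Nat.even_or_odd m with he | ho
  · rw [if_pos he, if_pos he]
  · rw [if_neg (Nat.not_even_iff_odd.mpr ho), if_neg (Nat.not_even_iff_odd.mpr ho)]
    ring

include hirr h0 h1 htend hfr in
/-- Disjointness of the intervals `I_m^i`, `0 ≤ i < q_{m+1}`. -/
lemma Ini_disjoint (m : ℕ) (i j : ℕ) (hij : i < j) (hj : j < cfQ α (m + 1)) :
    DynPart.Ini H α x0 m i ∩ DynPart.Ini H α x0 m j = ∅ := by
  have hqm := cfQ_pos hirr h0 h1 m
  have hk0 : (0 : ℤ) < (j : ℤ) - (i : ℤ) := by omega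
  have hk1 : (j : ℤ) - (i : ℤ) < (cfQ α (m + 1) : ℤ) := by omega
  obtain ⟨hb1, hb2⟩ := fract_bounds hirr h0 h1 m ((j : ℤ) - (i : ℤ)) hk0 hk1
  have hBpos := cfB_pos hirr h0 h1 m
  have hBlt := cfB_lt_one hirr h0 h1 m
  have hqa := fract_qa hirr h0 h1 m
  have hnqa := fract_neg_qm (α := α) hirr h0 h1 m
  -- fract((i-j)α) = 1 - fract((j-i)α)
  have hneg : Int.fract ((((i : ℤ) - (j : ℤ)) : ℝ) * α)
      = 1 - Int.fract ((((j : ℤ) - (i : ℤ)) : ℝ) * α) := by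
    have hne := fract_int_ne_zero (α := α) hirr ((j : ℤ) - (i : ℤ)) (by omega)
    rw [show (((i : ℤ) : ℝ) - ((j : ℤ) : ℝ)) * α = -((((j : ℤ) : ℝ) - ((i : ℤ) : ℝ)) * α)
        from by ring]
    have harg : ((((j : ℤ) - (i : ℤ)) : ℤ) : ℝ) * α = (((j : ℤ) : ℝ) - ((i : ℤ) : ℝ)) * α := by
      push_cast; ring
    rw [← harg]
    exact Int.fract_neg hne
  push_cast at hb1 hb2 hneg hnqa
  rcases Nat.even_or_odd m with he | ho
  · -- even case
    rw [Ini_eq, Ini_eq, if_pos he, if_pos he]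
    apply arc_disjoint_crit (pt_ne H x0 hirr htend hfr i j (by omega))
    · -- circDisp (pt i) (pt (i+qm)) ≤ circDisp (pt i) (pt j)
      by_contra hcon
      push_neg at hcon
      rw [pt_lt_iff H x0 hirr htend hfr i j (i + cfQ α m)] at hcon
      have hcast : ((((i + cfQ α m : ℕ) : ℤ) - (i : ℤ)) : ℝ) = ((cfQ α m : ℤ) : ℝ) := by
        push_cast; ring
      rw [hcast] at hcon
      push_cast at hcon
      push_cast at hqa
      rw [hqa, if_pos he] at hcon
      linarith
    · -- circDisp (pt j) (pt (j+qm)) ≤ circDisp (pt j) (pt i)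
      by_contra hcon
      push_neg at hcon
      rw [pt_lt_iff H x0 hirr htend hfr j i (j + cfQ α m)] at hcon
      have hcast : ((((j + cfQ α m : ℕ) : ℤ) - (j : ℤ)) : ℝ) = ((cfQ α m : ℤ) : ℝ) := by
        push_cast; ring
      rw [hcast] at hcon
      push_cast at hcon
      rw [hneg] at hcon
      push_cast at hqa
      rw [hqa, if_pos he] at hcon
      linarith
  · -- odd case
    have hno : ¬ Even m := Nat.not_even_iff_odd.mpr ho
    rw [Ini_eq, Ini_eq, if_neg hno, if_neg hno]
    apply arc_disjoint_crit (pt_ne H x0 hirr htend hfr (i + cfQ α m) (j + cfQ α m) (by omega))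
    · -- circDisp (pt (i+qm)) (pt i) ≤ circDisp (pt (i+qm)) (pt (j+qm))
      by_contra hcon
      push_neg at hcon
      rw [pt_lt_iff H x0 hirr htend hfr (i + cfQ α m) (j + cfQ α m) i] at hcon
      have hc1 : ((((j + cfQ α m : ℕ) : ℤ) - ((i + cfQ α m : ℕ) : ℤ)) : ℝ)
          = (((j : ℤ) - (i : ℤ)) : ℝ) := by push_cast; ring
      have hc2 : (((i : ℤ) - ((i + cfQ α m : ℕ) : ℤ)) : ℝ) = ((-(cfQ α m : ℤ) : ℤ) : ℝ) := by
        push_cast; ring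
      rw [hc1, hc2] at hcon
      push_cast at hcon
      rw [hnqa, if_neg hno] at hcon
      linarith
    · by_contra hcon
      push_neg at hcon
      rw [pt_lt_iff H x0 hirr htend hfr (j + cfQ α m) (i + cfQ α m) j] at hcon
      have hc1 : ((((i + cfQ α m : ℕ) : ℤ) - ((j + cfQ α m : ℕ) : ℤ)) : ℝ)
          = (((i : ℤ) - (j : ℤ)) : ℝ) := by push_cast; ring
      have hc2 : (((j : ℤ) - ((j + cfQ α m : ℕ) : ℤ)) : ℝ) = ((-(cfQ α m : ℤ) : ℤ) : ℝ) := by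
        push_cast; ring
      rw [hc1, hc2] at hcon
      push_cast at hcon
      rw [hnqa, if_neg hno, hneg] at hcon
      linarith

include hirr h0 h1 htend hfr in
/-- The dynamical partition covers the circle. -/
lemma covering (m : ℕ) :
    (⋃ i ∈ Set.Iio (cfQ α (m + 1)), DynPart.Ini H α x0 m i)
      ∪ (⋃ i ∈ Set.Iio (cfQ α m), DynPart.Ini H α x0 (m + 1) i) = Set.univ := by
  have hqm := cfQ_pos hirr h0 h1 m
  have hqm1 := cfQ_pos hirr h0 h1 (m + 1)
  apply Set.eq_univ_of_forall
  intro z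
  obtain ⟨i0, hi0E, hmin⟩ := Finset.exists_min_image (Finset.range (cfQ α (m + 1) + cfQ α m))
    (fun i => circDisp (DynPart.pt H x0 i) z) ⟨0, by simp; omega⟩
  have hi0 : i0 < cfQ α (m + 1) + cfQ α m := Finset.mem_range.mp hi0E
  have hin : ∀ r : ℕ, r < cfQ α (m + 1) + cfQ α m → r ≠ i0 →
      z ∈ arcIco (DynPart.pt H x0 i0) (DynPart.pt H x0 r) := by
    intro r hr hne
    by_contra hznot
    rw [mem_arcIco_iff] at hznot
    push_neg at hznot
    have hptne : DynPart.pt H x0 i0 ≠ DynPart.pt H x0 r :=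
      pt_ne H x0 hirr htend hfr i0 r (Ne.symm hne)
    have hc := circDisp_cocycle hptne hznot
    have hpos := circDisp_pos_of_ne hptne
    have hm := hmin r (Finset.mem_range.mpr hr)
    linarith
  rcases Nat.even_or_odd m with he | ho
  · by_cases hc : i0 < cfQ α (m + 1)
    · apply Set.mem_union_left
      apply Set.mem_biUnion (show i0 ∈ Set.Iio (cfQ α (m + 1)) from hc)
      rw [Ini_eq, if_pos he]
      exact hin (i0 + cfQ α m) (by omega) (by omega)
    · apply Set.mem_union_right
      push_neg at hc
      obtain ⟨j, rfl⟩ : ∃ j, i0 = j + cfQ α (m + 1) := ⟨i0 - cfQ α (m + 1), by omega⟩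
      have hj : j < cfQ α m := by omega
      apply Set.mem_biUnion (show j ∈ Set.Iio (cfQ α m) from hj)
      rw [Ini_eq, if_neg (by simp [Nat.even_add_one]; exact he)]
      exact hin j (by omega) (by omega)
  · by_cases hc : i0 < cfQ α m
    · apply Set.mem_union_right
      apply Set.mem_biUnion (show i0 ∈ Set.Iio (cfQ α m) from hc)
      rw [Ini_eq, if_pos (Nat.even_add_one.mpr (Nat.not_even_iff_odd.mpr ho))]
      exact hin (i0 + cfQ α (m + 1)) (by omega) (by omega)
    · apply Set.mem_union_left
      push_neg at hc
      obtain ⟨j, rfl⟩ : ∃ j, i0 = j + cfQ α m := ⟨i0 - cfQ α m, by omega⟩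
      have hj : j < cfQ α (m + 1) := by omega
      apply Set.mem_biUnion (show j ∈ Set.Iio (cfQ α (m + 1)) from hj)
      rw [Ini_eq, if_neg (Nat.not_even_iff_odd.mpr ho)]
      exact hin j (by omega) (by omega)

lemma meas_Ini (m i : ℕ) : MeasurableSet (DynPart.Ini H α x0 m i) := by
  rw [Ini_eq]
  split
  · exact measurableSet_arcIco _ _
  · exact measurableSet_arcIco _ _

lemma In_eq_Ini0 (m : ℕ) : DynPart.In H α x0 m = DynPart.Ini H α x0 m 0 := by
  rw [DynPart.Ini]
  simp

lemma meas_In (m : ℕ) : MeasurableSet (DynPart.In H α x0 m) := by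
  rw [In_eq_Ini0]
  exact meas_Ini H x0 m 0

variable (μ : Measure Circle1)

lemma measure_image (hmap : μ.map H.toFun = μ) (S : Set Circle1) (hS : MeasurableSet S) :
    μ (H.toFun '' S) = μ S := by
  have himg : H.toFun '' S = H.toHomeo.symm ⁻¹' S := by
    ext z
    constructor
    · rintro ⟨w, hw, rfl⟩
      simpa [DynPart.pt, CircleHomeo.toFun] using hw
    · intro hz
      exact ⟨H.toHomeo.symm z, hz, by simp [CircleHomeo.toFun]⟩
  have hmeas_symm : MeasurableSet (H.toHomeo.symm ⁻¹' S) :=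
    H.toHomeo.symm.continuous.measurable hS
  have hmf : Measurable H.toFun := H.toHomeo.continuous.measurable
  rw [himg]
  calc μ (H.toHomeo.symm ⁻¹' S) = (μ.map H.toFun) (H.toHomeo.symm ⁻¹' S) := by rw [hmap]
    _ = μ (H.toFun ⁻¹' (H.toHomeo.symm ⁻¹' S)) := Measure.map_apply hmf hmeas_symm
    _ = μ S := by
        rw [← Set.preimage_comp]
        have : (H.toHomeo.symm ∘ H.toFun) = id := by
          funext w
          simp [CircleHomeo.toFun]
        rw [this, Set.preimage_id]

lemma measure_Ini_eq (hmap : μ.map H.toFun = μ) (m i : ℕ) :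
    μ (DynPart.Ini H α x0 m i) = μ (DynPart.In H α x0 m) := by
  induction i with
  | zero => rw [← In_eq_Ini0]
  | succ i ih =>
    have hstep : DynPart.Ini H α x0 m (i + 1) = H.toFun '' DynPart.Ini H α x0 m i := by
      rw [DynPart.Ini, DynPart.Ini, ← Set.image_comp]
      congr 1
      exact (Function.iterate_succ' H.toFun i) ▸ rfl
    rw [hstep, measure_image H μ hmap _ (meas_Ini H x0 m i), ih]

include hirr h0 h1 htend hfr in
lemma measure_biUnion_Ini (hmap : μ.map H.toFun = μ) (m K : ℕ) (hK : K ≤ cfQ α (m + 1)) :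
    μ (⋃ i ∈ Set.Iio K, DynPart.Ini H α x0 m i)
      = (K : ℝ≥0∞) * μ (DynPart.In H α x0 m) := by
  have hconv : (⋃ i ∈ Set.Iio K, DynPart.Ini H α x0 m i)
      = ⋃ i ∈ (Finset.range K), DynPart.Ini H α x0 m i := by
    rw [← Finset.coe_range, Finset.set_biUnion_coe]
  rw [hconv]
  have hdisj : ((Finset.range K) : Set ℕ).PairwiseDisjoint (DynPart.Ini H α x0 m ·) := by
    intro a ha b hb hab
    rw [Finset.mem_coe, Finset.mem_range] at ha hb
    rcases lt_or_gt_of_ne hab with hlt | hgt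
    · exact Set.disjoint_iff_inter_eq_empty.mpr
        (Ini_disjoint H x0 hirr h0 h1 htend hfr m a b hlt (by omega))
    · exact Disjoint.symm (Set.disjoint_iff_inter_eq_empty.mpr
        (Ini_disjoint H x0 hirr h0 h1 htend hfr m b a hgt (by omega)))
  rw [measure_biUnion_finset hdisj (fun b _ => meas_Ini H x0 m b)]
  rw [Finset.sum_congr rfl (fun i _ => measure_Ini_eq H x0 μ hmap m i)]
  rw [Finset.sum_const, Finset.card_range, nsmul_eq_mul]

end Main

end Stmt11NT

end


/-- Writing `δ_n = μ(I_n)`, one has `q_{n-1} δ_n ≤ 1/(a_{n+1} a_n)` and hence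
`μ(⋃_{i<q_n} I_{n-1}^i) = q_n δ_{n-1} ≥ 1 - 1/(a_n a_{n+1})`. -/
theorem stmt11 (H : CircleHomeo) (α : ℝ) (hirr : Irrational α)
    (hrot : HasRotationNumber H α) (μ : Measure Circle1)
    (hμ : IsInvProbMeasure H μ)
    (huniq : ∀ ν : Measure Circle1, IsInvProbMeasure H ν → ν = μ)
    (x0 : Circle1) (n : ℕ) (hn : 1 ≤ n) :
    (cfQ α (n - 1) : ℝ≥0∞) * μ (DynPart.In H α x0 n)
        ≤ 1 / ((cfA α (n + 1) : ℝ≥0∞) * (cfA α n : ℝ≥0∞)) ∧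
    μ (⋃ i ∈ Set.Iio (cfQ α n), DynPart.Ini H α x0 (n - 1) i)
        = (cfQ α n : ℝ≥0∞) * μ (DynPart.In H α x0 (n - 1)) ∧
    1 - 1 / ((cfA α n : ℝ≥0∞) * (cfA α (n + 1) : ℝ≥0∞))
        ≤ (cfQ α n : ℝ≥0∞) * μ (DynPart.In H α x0 (n - 1)) := by
  classical
  obtain ⟨⟨hα0, hα1⟩, β, hfr, htend⟩ := hrot
  have h0 : 0 < α := lt_of_le_of_ne hα0 (Ne.symm hirr.ne_zero)
  obtain ⟨hprob, hmap⟩ := hμ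
  haveI := hprob
  obtain ⟨m, rfl⟩ : ∃ m, n = m + 1 := ⟨n - 1, by omega⟩
  simp only [Nat.add_sub_cancel]
  have key2 : μ (⋃ i ∈ Set.Iio (cfQ α (m + 1)), DynPart.Ini H α x0 m i)
      = (cfQ α (m + 1) : ℝ≥0∞) * μ (DynPart.In H α x0 m) :=
    Stmt11NT.measure_biUnion_Ini H x0 hirr h0 hα1 htend hfr μ hmap m (cfQ α (m + 1)) le_rfl
  have key1 : μ (⋃ i ∈ Set.Iio (cfQ α (m + 1 + 1)), DynPart.Ini H α x0 (m + 1) i)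
      = (cfQ α (m + 1 + 1) : ℝ≥0∞) * μ (DynPart.In H α x0 (m + 1)) :=
    Stmt11NT.measure_biUnion_Ini H x0 hirr h0 hα1 htend hfr μ hmap (m + 1)
      (cfQ α (m + 1 + 1)) le_rfl
  have hle1 : (cfQ α (m + 1 + 1) : ℝ≥0∞) * μ (DynPart.In H α x0 (m + 1)) ≤ 1 := by
    rw [← key1]
    exact (measure_mono (Set.subset_univ _)).trans_eq measure_univ
  have hA1 : 1 ≤ cfA α (m + 1) := Stmt11NT.cfA_ge_one hirr h0 hα1 m
  have hA2 : 1 ≤ cfA α (m + 1 + 1) := Stmt11NT.cfA_ge_one hirr h0 hα1 (m + 1)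
  have hA1ne : (cfA α (m + 1) : ℝ≥0∞) ≠ 0 := by
    simp only [ne_eq, Nat.cast_eq_zero]
    omega
  have hA2ne : (cfA α (m + 1 + 1) : ℝ≥0∞) ≠ 0 := by
    simp only [ne_eq, Nat.cast_eq_zero]
    omega
  have harith : cfA α (m + 1 + 1) * cfA α (m + 1) * cfQ α m ≤ cfQ α (m + 1 + 1) := by
    have := Stmt11NT.cfA_mul_le hirr h0 hα1 (m + 1) (by omega)
    simpa using this
  have part1 : (cfQ α m : ℝ≥0∞) * μ (DynPart.In H α x0 (m + 1))
      ≤ 1 / ((cfA α (m + 1 + 1) : ℝ≥0∞) * (cfA α (m + 1) : ℝ≥0∞)) := by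
    rw [ENNReal.le_div_iff_mul_le
      (Or.inl (mul_ne_zero hA2ne hA1ne))
      (Or.inl (ENNReal.mul_ne_top (ENNReal.natCast_ne_top _) (ENNReal.natCast_ne_top _)))]
    calc (cfQ α m : ℝ≥0∞) * μ (DynPart.In H α x0 (m + 1))
        * ((cfA α (m + 1 + 1) : ℝ≥0∞) * (cfA α (m + 1) : ℝ≥0∞))
        = ((cfA α (m + 1 + 1) * cfA α (m + 1) * cfQ α m : ℕ) : ℝ≥0∞)
          * μ (DynPart.In H α x0 (m + 1)) := by push_cast; ring
      _ ≤ (cfQ α (m + 1 + 1) : ℝ≥0∞) * μ (DynPart.In H α x0 (m + 1)) :=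
          mul_le_mul_left (by exact_mod_cast harith) _
      _ ≤ 1 := hle1
  refine ⟨part1, key2, ?_⟩
  -- part (iii)
  have hcov := Stmt11NT.covering H x0 hirr h0 hα1 htend hfr m
  have hU2 : μ (⋃ i ∈ Set.Iio (cfQ α m), DynPart.Ini H α x0 (m + 1) i)
      = (cfQ α m : ℝ≥0∞) * μ (DynPart.In H α x0 (m + 1)) :=
    Stmt11NT.measure_biUnion_Ini H x0 hirr h0 hα1 htend hfr μ hmap (m + 1) (cfQ α m)
      (le_trans (Stmt11NT.cfQ_le_succ hirr h0 hα1 m) (Stmt11NT.cfQ_le_succ hirr h0 hα1 (m + 1)))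
  have hone : (1 : ℝ≥0∞) ≤ (cfQ α (m + 1) : ℝ≥0∞) * μ (DynPart.In H α x0 m)
      + (cfQ α m : ℝ≥0∞) * μ (DynPart.In H α x0 (m + 1)) := by
    calc (1 : ℝ≥0∞) = μ Set.univ := measure_univ.symm
      _ = μ ((⋃ i ∈ Set.Iio (cfQ α (m + 1)), DynPart.Ini H α x0 m i)
            ∪ (⋃ i ∈ Set.Iio (cfQ α m), DynPart.Ini H α x0 (m + 1) i)) := by rw [hcov]
      _ ≤ μ (⋃ i ∈ Set.Iio (cfQ α (m + 1)), DynPart.Ini H α x0 m i)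
            + μ (⋃ i ∈ Set.Iio (cfQ α m), DynPart.Ini H α x0 (m + 1) i) := measure_union_le _ _
      _ = _ := by rw [key2, hU2]
  rw [tsub_le_iff_right]
  calc (1 : ℝ≥0∞) ≤ (cfQ α (m + 1) : ℝ≥0∞) * μ (DynPart.In H α x0 m)
      + (cfQ α m : ℝ≥0∞) * μ (DynPart.In H α x0 (m + 1)) := hone
    _ ≤ (cfQ α (m + 1) : ℝ≥0∞) * μ (DynPart.In H α x0 m)
      + 1 / ((cfA α (m + 1) : ℝ≥0∞) * (cfA α (m + 1 + 1) : ℝ≥0∞)) := by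
        refine add_le_add_right ?_ _
        rw [mul_comm ((cfA α (m + 1) : ℝ≥0∞)) ((cfA α (m + 1 + 1) : ℝ≥0∞))]
        exact part1
end

section
/- Let f be an orientation-preserving circle homeomorphism with irrational rotation number α = [a_1, a_2, …], unique invariant Borel probability measure μ, and let x_0 ∈ S^1. Writing δ_n = μ(I_n), for every n ≥ 1 one has μ(∪_{i=0}^{q_n−1} (I_{n−1}^i \ I_{n+1}^i)) = q_n·(δ_{n−1} − δ_{n+1}) ≥ 1 − 2/a_{n+1}. -/
open MeasureTheory Set Filter
open scoped ENNReal NNReal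

noncomputable section AuxNT

def cfP (α : ℝ) : ℕ → ℤ
  | 0 => 0
  | 1 => 1
  | n + 2 => cfA α (n + 2) * cfP α (n + 1) + cfP α n

def PiG (α : ℝ) (l : ℕ) : ℝ := ∏ k ∈ Finset.range (l + 1), gaussIter α k

section NT
variable {α : ℝ}

lemma gauss_mem (hirr : Irrational α) (h01 : α ∈ Set.Ioo (0:ℝ) 1) : ∀ k, gaussIter α k ∈ Set.Ioo (0:ℝ) 1 ∧ Irrational (gaussIter α k) := by
  intro k
  induction k with
  | zero => exact ⟨h01, hirr⟩
  | succ k ih =>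
    obtain ⟨⟨hk0, hk1⟩, hki⟩ := ih
    have heq : gaussIter α (k+1) = Int.fract (gaussIter α k)⁻¹ := by
      simp [gaussIter, one_div]
    have hinv : Irrational (gaussIter α k)⁻¹ := hki.inv
    have hfr : Irrational (Int.fract (gaussIter α k)⁻¹) := by
      unfold Int.fract; exact hinv.sub_intCast _
    refine ⟨⟨?_, ?_⟩, heq ▸ hfr⟩
    · rw [heq]
      rcases lt_or_eq_of_le (Int.fract_nonneg (gaussIter α k)⁻¹) with h | h
      · exact h
      · rw [← h] at hfr
        exact absurd hfr (fun hh => hh ⟨0, by norm_num⟩)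
    · rw [heq]; exact Int.fract_lt_one _

lemma gauss_pos (hirr : Irrational α) (h01 : α ∈ Set.Ioo (0:ℝ) 1) (k : ℕ) : 0 < gaussIter α k := (gauss_mem hirr h01 k).1.1
lemma gauss_lt_one (hirr : Irrational α) (h01 : α ∈ Set.Ioo (0:ℝ) 1) (k : ℕ) : gaussIter α k < 1 := (gauss_mem hirr h01 k).1.2
lemma gauss_irr (hirr : Irrational α) (h01 : α ∈ Set.Ioo (0:ℝ) 1) (k : ℕ) : Irrational (gaussIter α k) := (gauss_mem hirr h01 k).2

lemma one_lt_inv_gauss (hirr : Irrational α) (h01 : α ∈ Set.Ioo (0:ℝ) 1) (k : ℕ) : 1 < (gaussIter α k)⁻¹ :=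
  (one_lt_inv₀ (gauss_pos hirr h01 k)).2 (gauss_lt_one hirr h01 k)

lemma cfA_cast (hirr : Irrational α) (h01 : α ∈ Set.Ioo (0:ℝ) 1) (k : ℕ) : (cfA α (k+1) : ℤ) = ⌊(gaussIter α k)⁻¹⌋ := by
  unfold cfA
  simp only [Nat.add_sub_cancel, one_div]
  exact Int.natCast_floor_eq_floor (le_of_lt (lt_trans one_pos (one_lt_inv_gauss hirr h01 k)))

lemma cfA_pos (hirr : Irrational α) (h01 : α ∈ Set.Ioo (0:ℝ) 1) (k : ℕ) : 1 ≤ cfA α (k+1) := by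
  unfold cfA
  simp only [Nat.add_sub_cancel, one_div]
  exact Nat.one_le_floor_iff _ |>.2 (le_of_lt (one_lt_inv_gauss hirr h01 k))

lemma gauss_succ (hirr : Irrational α) (h01 : α ∈ Set.Ioo (0:ℝ) 1) (k : ℕ) :
    gaussIter α (k+1) = (gaussIter α k)⁻¹ - cfA α (k+1) := by
  have : gaussIter α (k+1) = Int.fract (gaussIter α k)⁻¹ := by simp [gaussIter, one_div]
  rw [this, Int.fract]
  congr 1
  exact_mod_cast (cfA_cast hirr h01 k).symm

lemma PiG_succ (l : ℕ) : PiG α (l+1) = PiG α l * gaussIter α (l+1) :=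
  Finset.prod_range_succ _ _

lemma gauss_zero : gaussIter α 0 = α := rfl

lemma PiG_zero : PiG α 0 = α := by
  simp [PiG, Finset.prod_range_one, gauss_zero]

lemma PiG_pos (hirr : Irrational α) (h01 : α ∈ Set.Ioo (0:ℝ) 1) (l : ℕ) : 0 < PiG α l := by
  induction l with
  | zero => rw [PiG_zero]; exact h01.1
  | succ l ih => rw [PiG_succ]; exact mul_pos ih (gauss_pos hirr h01 _)

lemma PiG_lt_one (hirr : Irrational α) (h01 : α ∈ Set.Ioo (0:ℝ) 1) (l : ℕ) : PiG α l < 1 := by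
  induction l with
  | zero => rw [PiG_zero]; exact h01.2
  | succ l ih =>
    rw [PiG_succ]
    calc PiG α l * gaussIter α (l+1) < PiG α l * 1 :=
      (mul_lt_mul_iff_right₀ (PiG_pos hirr h01 l)).2 (gauss_lt_one hirr h01 _)
    _ = PiG α l := mul_one _
    _ < 1 := ih

lemma PiG_anti (hirr : Irrational α) (h01 : α ∈ Set.Ioo (0:ℝ) 1) (l : ℕ) : PiG α (l+1) < PiG α l := by
  rw [PiG_succ]
  calc PiG α l * gaussIter α (l+1) < PiG α l * 1 :=
    (mul_lt_mul_iff_right₀ (PiG_pos hirr h01 l)).2 (gauss_lt_one hirr h01 _)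
  _ = PiG α l := mul_one _

lemma PiG_rec (hirr : Irrational α) (h01 : α ∈ Set.Ioo (0:ℝ) 1) (l : ℕ) : PiG α (l+2) = PiG α l - cfA α (l+2) * PiG α (l+1) := by
  have h2 : PiG α (l+2) = PiG α (l+1) * gaussIter α (l+2) := PiG_succ _
  have h1 : PiG α (l+1) = PiG α l * gaussIter α (l+1) := PiG_succ _
  rw [h2, h1, gauss_succ hirr h01 (l+1)]
  have hg : gaussIter α (l+1) ≠ 0 := ne_of_gt (gauss_pos hirr h01 _)
  field_simp

lemma cfQ_pos (hirr : Irrational α) (h01 : α ∈ Set.Ioo (0:ℝ) 1) (l : ℕ) : 1 ≤ cfQ α l := by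
  induction l using Nat.strong_induction_on with
  | _ l ih =>
    match l with
    | 0 => exact le_refl 1
    | 1 => exact cfA_pos hirr h01 0
    | (l+2) =>
      show 1 ≤ cfA α (l + 2) * cfQ α (l + 1) + cfQ α l
      have h2 := ih l (by omega)
      omega

lemma cfQ_mono (hirr : Irrational α) (h01 : α ∈ Set.Ioo (0:ℝ) 1) (l : ℕ) : cfQ α l ≤ cfQ α (l+1) := by
  match l with
  | 0 => exact cfA_pos hirr h01 0
  | (l+1) =>
    show cfQ α (l+1) ≤ cfA α (l + 2) * cfQ α (l + 1) + cfQ α l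
    have h1 := cfA_pos hirr h01 (l+1)
    nlinarith [cfQ_pos hirr h01 l, cfQ_pos hirr h01 (l+1)]

lemma conv_id (hirr : Irrational α) (h01 : α ∈ Set.Ioo (0:ℝ) 1) (l : ℕ) : (cfQ α l : ℝ) * α - cfP α l = (-1)^l * PiG α l := by
  induction l using Nat.strong_induction_on with
  | _ l ih =>
    match l with
    | 0 => simp [cfQ, cfP, PiG_zero]
    | 1 =>
      show (cfA α 1 : ℝ) * α - (1:ℤ) = (-1)^1 * PiG α 1
      have hc : (cfA α 1 : ℝ) = (⌊α⁻¹⌋ : ℤ) := by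
        have := cfA_cast hirr h01 0
        have h0 : gaussIter α 0 = α := rfl
        rw [h0] at this
        exact_mod_cast congrArg (fun z : ℤ => (z : ℝ)) this
      have hP : PiG α 1 = α * gaussIter α 1 := by rw [PiG_succ, PiG_zero]
      have hg : gaussIter α 1 = α⁻¹ - cfA α 1 := by
        have := gauss_succ hirr h01 0
        have h0 : gaussIter α 0 = α := rfl
        rwa [h0] at this
      rw [hP, hg, hc]
      have hα : α ≠ 0 := ne_of_gt h01.1
      push_cast
      field_simp
      ring
    | (l+2) =>
      have ih1 := ih (l+1) (by omega)
      have ih0 := ih l (by omega)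
      show ((cfA α (l+2) * cfQ α (l+1) + cfQ α l : ℕ) : ℝ) * α
          - ((cfA α (l+2) * cfP α (l+1) + cfP α l : ℤ) : ℝ) = (-1)^(l+2) * PiG α (l+2)
      rw [PiG_rec hirr h01 l]
      have e2 : (-1:ℝ)^(l+2) = (-1)^l := by ring
      have e1 : (-1:ℝ)^(l+1) = -(-1)^l := by ring
      rw [e2] ; rw [e1] at ih1
      push_cast
      linear_combination (cfA α (l+2) : ℝ) * ih1 + ih0

end NT

section NT2
variable {α : ℝ}

lemma det_id (l : ℕ) : (cfQ α l : ℤ) * cfP α (l+1) - (cfQ α (l+1) : ℤ) * cfP α l = (-1)^l := by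
  induction l with
  | zero => simp [cfQ, cfP]
  | succ l ih =>
    have hq : (cfQ α (l+2) : ℤ) = cfA α (l+2) * cfQ α (l+1) + cfQ α l := by
      show ((cfA α (l + 2) * cfQ α (l + 1) + cfQ α l : ℕ) : ℤ) = _
      push_cast; ring
    have hp : cfP α (l+2) = cfA α (l+2) * cfP α (l+1) + cfP α l := rfl
    have e1 : (-1:ℤ)^(l+1) = -(-1)^l := by ring
    rw [hq, hp, e1]
    linear_combination -ih

lemma key (hirr : Irrational α) (h01 : α ∈ Set.Ioo (0:ℝ) 1) (l : ℕ) (j p : ℤ)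
    (h1 : 0 < (-1:ℝ)^l * ((j:ℝ)*α - p)) (h2 : (-1:ℝ)^l * ((j:ℝ)*α - p) < PiG α l)
    (h3 : -(cfQ α (l+1):ℤ) < j) (h4 : j < (cfQ α (l+1) : ℤ) + cfQ α l) : False := by
  set x : ℤ := (-1)^l * (j * cfP α (l+1) - p * cfQ α (l+1)) with hxdef
  set y : ℤ := (-1)^l * (p * cfQ α l - j * cfP α l) with hydef
  have hdet := det_id (α := α) l
  have hee : (-1:ℤ)^l * (-1)^l = 1 := by
    rw [← pow_add]; exact Even.neg_one_pow ⟨l, by ring⟩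
  have hx : x * cfQ α l + y * cfQ α (l+1) = j := by
    rw [hxdef, hydef]
    linear_combination ((-1:ℤ)^l * j) * hdet + j * hee
  have hp : x * cfP α l + y * cfP α (l+1) = p := by
    rw [hxdef, hydef]
    linear_combination ((-1:ℤ)^l * p) * hdet + p * hee
  have c0 := conv_id hirr h01 l
  have c1 := conv_id hirr h01 (l+1)
  have e1 : (-1:ℝ)^(l+1) = -(-1)^l := by ring
  rw [e1] at c1
  have heeR : (-1:ℝ)^l * (-1)^l = 1 := by
    rw [← pow_add]; exact Even.neg_one_pow ⟨l, by ring⟩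
  have hxR : (x:ℝ) * cfQ α l + (y:ℝ) * cfQ α (l+1) = (j:ℝ) := by exact_mod_cast congrArg (fun z : ℤ => (z:ℝ)) hx
  have hpR : (x:ℝ) * cfP α l + (y:ℝ) * cfP α (l+1) = (p:ℝ) := by exact_mod_cast congrArg (fun z : ℤ => (z:ℝ)) hp
  have hval : (-1:ℝ)^l * ((j:ℝ)*α - p) = (x:ℝ) * PiG α l - (y:ℝ) * PiG α (l+1) := by
    linear_combination (-((-1:ℝ)^l * α)) * hxR + ((-1:ℝ)^l) * hpR + ((-1:ℝ)^l * (x:ℝ)) * c0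
      + ((-1:ℝ)^l * (y:ℝ)) * c1 + ((x:ℝ) * PiG α l - (y:ℝ) * PiG α (l+1)) * heeR
  rw [hval] at h1 h2
  have hPl := PiG_pos hirr h01 l
  have hPl1 := PiG_pos hirr h01 (l+1)
  have hql : (1:ℤ) ≤ cfQ α l := by exact_mod_cast cfQ_pos hirr h01 l
  have hql1 : (1:ℤ) ≤ cfQ α (l+1) := by exact_mod_cast cfQ_pos hirr h01 (l+1)
  rcases lt_trichotomy y 0 with hy | hy | hy
  · -- y ≤ -1, show x ≤ 0
    have hyZ : y ≤ -1 := by omega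
    have hy1 : (y:ℝ) ≤ -1 := by exact_mod_cast hyZ
    have hxle : (x:ℝ) < 1 := by nlinarith
    have hxZ : x ≤ 0 := by
      have h' : x < 1 := by exact_mod_cast hxle
      omega
    have hqlZ : (1:ℤ) ≤ cfQ α l := hql
    have : j ≤ -(cfQ α (l+1):ℤ) := by nlinarith [hx, hxZ, hyZ, hql, hql1]
    omega
  · -- y = 0
    rw [hy] at h1 h2
    push_cast at h1 h2
    have hx1 : 0 < (x:ℝ) := by nlinarith
    have hx2 : (x:ℝ) < 1 := by nlinarith
    have h1' : (0:ℤ) < x := by exact_mod_cast hx1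
    have h2' : x < 1 := by exact_mod_cast hx2
    omega
  · -- y ≥ 1, show x ≥ 1
    have hy1 : (1:ℝ) ≤ (y:ℝ) := by exact_mod_cast hy
    have hx1 : 0 < (x:ℝ) := by nlinarith
    have hxZ : 1 ≤ x := by
      have h' : (0:ℤ) < x := by exact_mod_cast hx1
      omega
    have hyZ : 1 ≤ y := hy
    have : (cfQ α (l+1):ℤ) + cfQ α l ≤ j := by nlinarith [hx, hxZ, hyZ, hql, hql1]
    omega

lemma cor (hirr : Irrational α) (h01 : α ∈ Set.Ioo (0:ℝ) 1) (l : ℕ) (j : ℤ)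
    (hj0 : j ≠ 0) (hjl : j ≠ cfQ α l)
    (h3 : -(cfQ α (l+1):ℤ) < j) (h4 : j < (cfQ α (l+1) : ℤ) + cfQ α l) :
    PiG α l < Int.fract ((-1:ℝ)^l * ((j:ℝ) * α)) := by
  have hee : (-1:ℝ)^l * (-1)^l = 1 := by
    rw [← pow_add]; exact Even.neg_one_pow ⟨l, by ring⟩
  set x : ℝ := (-1:ℝ)^l * ((j:ℝ) * α) with hxdef
  have hxirr : Irrational x := by
    have hm : ((-1:ℤ)^l * j) ≠ 0 := by
      intro h; rcases mul_eq_zero.1 h with h' | h'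
      · exact absurd h' (pow_ne_zero _ (by norm_num))
      · exact hj0 h'
    have := hirr.intCast_mul hm
    have hcast : (((-1:ℤ)^l * j : ℤ):ℝ) * α = x := by push_cast; ring
    rwa [hcast] at this
  have hfr0 : 0 < Int.fract x := by
    rcases lt_or_eq_of_le (Int.fract_nonneg x) with h | h
    · exact h
    · exfalso
      have hx0 : x = (⌊x⌋ : ℝ) := by
        have h' : Int.fract x = 0 := h.symm
        rw [Int.fract, sub_eq_zero] at h'
        exact h'
      exact hxirr.ne_int ⌊x⌋ hx0
  by_contra hcon
  push_neg at hcon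
  rcases lt_or_eq_of_le hcon with hlt | heq
  · -- fract x < PiG l : contradiction via key
    have hfx : (-1:ℝ)^l * ((j:ℝ)*α - (((-1:ℤ)^l * ⌊x⌋ : ℤ):ℝ)) = Int.fract x := by
      rw [Int.fract]; push_cast
      linear_combination (-1:ℝ) * hxdef - (⌊x⌋:ℝ) * hee
    refine key hirr h01 l j ((-1)^l * ⌊x⌋) ?_ ?_ h3 h4
    · rw [hfx]; exact hfr0
    · rw [hfx]; exact hlt
  · -- fract x = PiG l forces j = q_l
    exfalso
    have c0 := conv_id hirr h01 l
    have hfr : x - ⌊x⌋ = PiG α l := by rw [← heq, Int.fract]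
    -- (-1)^l * (j - q_l) * α = ⌊x⌋ + (-1)^l * (- p_l)?? derive integer equality
    have hkey : (((-1:ℤ)^l * (j - cfQ α l) : ℤ) : ℝ) * α = ((⌊x⌋ - (-1:ℤ)^l * cfP α l : ℤ) : ℝ) := by
      push_cast
      linear_combination hfr - hxdef - ((-1:ℝ)^l) * c0 - (PiG α l) * hee
    have hne : ((-1:ℤ)^l * (j - cfQ α l)) ≠ 0 := by
      intro h; rcases mul_eq_zero.1 h with h' | h'
      · exact absurd h' (pow_ne_zero _ (by norm_num))
      · exact hjl (by omega)
    exact (hirr.intCast_mul hne).ne_int _ hkey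

lemma factA (hirr : Irrational α) (h01 : α ∈ Set.Ioo (0:ℝ) 1) (l : ℕ) :
    Int.fract ((-1:ℝ)^l * ((cfQ α l : ℝ) * α)) = PiG α l := by
  have c0 := conv_id hirr h01 l
  have hee : (-1:ℝ)^l * (-1)^l = 1 := by
    rw [← pow_add]; exact Even.neg_one_pow ⟨l, by ring⟩
  have hx : (-1:ℝ)^l * ((cfQ α l : ℝ) * α) = ((((-1:ℤ)^l * cfP α l) : ℤ) : ℝ) + PiG α l := by
    push_cast; linear_combination ((-1:ℝ)^l) * c0 + (PiG α l) * hee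
  rw [hx, Int.fract_intCast_add, Int.fract_eq_self.2
    ⟨(PiG_pos hirr h01 l).le, PiG_lt_one hirr h01 l⟩]

lemma factB (hirr : Irrational α) (h01 : α ∈ Set.Ioo (0:ℝ) 1) (l : ℕ) (hl : Odd l) :
    Int.fract ((((cfQ α (l+2) : ℤ) - (cfQ α l : ℤ) : ℤ) : ℝ) * α) = PiG α l - PiG α (l+2) := by
  have c0 := conv_id hirr h01 l
  have c2 := conv_id hirr h01 (l+2)
  have hsign : (-1:ℝ)^l = -1 := Odd.neg_one_pow hl
  have hsign2 : (-1:ℝ)^(l+2) = -1 := by rw [pow_add]; simp [hsign]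
  rw [hsign] at c0; rw [hsign2] at c2
  have hx : ((((cfQ α (l+2) : ℤ) - (cfQ α l : ℤ) : ℤ)) : ℝ) * α
      = (((cfP α (l+2) - cfP α l : ℤ)) : ℝ) + (PiG α l - PiG α (l+2)) := by
    push_cast; linarith [c0, c2]
  have hlt : PiG α (l+2) < PiG α l :=
    lt_trans (PiG_anti hirr h01 (l+1)) (PiG_anti hirr h01 l)
  rw [hx, Int.fract_intCast_add, Int.fract_eq_self.2
    ⟨by linarith, by linarith [PiG_lt_one hirr h01 l, PiG_pos hirr h01 (l+2)]⟩]

end NT2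

end AuxNT

noncomputable section AuxCirc

section CircleBasic

lemma projC_surj : Function.Surjective projC := fun z => Quotient.exists_rep z

lemma projC_add (a b : ℝ) : projC (a + b) = projC a + projC b := rfl

lemma projC_intCast (k : ℤ) : projC (k : ℝ) = 0 := by
  simp [projC]

lemma projC_sub_int (v : ℝ) (k : ℤ) : projC (v - (k:ℝ)) = projC v := by
  have h : projC (v - (k:ℝ)) = projC v - projC (k:ℝ) := rfl
  rw [h, projC_intCast, sub_zero]

lemma fract_neg_case {x : ℝ} (h0 : -1 ≤ x) (h1 : x < 0) : Int.fract x = x + 1 := by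
  have h' := Int.fract_add_intCast (x + 1) (-1)
  have harg : x + 1 + ((-1 : ℤ):ℝ) = x := by push_cast; ring
  rw [harg] at h'
  rw [h']
  exact Int.fract_eq_self.2 ⟨by linarith, by linarith⟩

lemma circDisp_proj (u v : ℝ) : circDisp (projC u) (projC v) = Int.fract (v - u) := by
  have : (projC v - projC u) = ((v - u : ℝ) : Circle1) := by
    simp [projC]
  rw [circDisp, this]
  have := AddCircle.coe_equivIco_mk_apply (p := (1:ℝ)) (v - u)
  simpa using this

lemma circDisp_nonneg (a z : Circle1) : 0 ≤ circDisp a z := by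
  obtain ⟨u, rfl⟩ := projC_surj a
  obtain ⟨v, rfl⟩ := projC_surj z
  rw [circDisp_proj]; exact Int.fract_nonneg _

lemma circDisp_lt_one (a z : Circle1) : circDisp a z < 1 := by
  obtain ⟨u, rfl⟩ := projC_surj a
  obtain ⟨v, rfl⟩ := projC_surj z
  rw [circDisp_proj]; exact Int.fract_lt_one _

lemma circDisp_self (a : Circle1) : circDisp a a = 0 := by
  obtain ⟨u, rfl⟩ := projC_surj a
  rw [circDisp_proj]; simp

lemma recon (u : ℝ) (z : Circle1) : z = projC (u + circDisp (projC u) z) := by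
  obtain ⟨v, rfl⟩ := projC_surj z
  rw [circDisp_proj]
  rw [Int.fract]
  have : u + (v - u - ↑⌊v - u⌋) = v - (⌊v - u⌋ : ℝ) := by ring
  rw [this]
  show _ = projC (v - (⌊v - u⌋ : ℝ))
  have : projC (v - (⌊v - u⌋:ℝ)) = projC v - projC (⌊v-u⌋:ℝ) := rfl
  rw [this, projC_intCast]
  simp

lemma circDisp_eq_zero_iff {a z : Circle1} : circDisp a z = 0 ↔ z = a := by
  constructor
  · intro h
    obtain ⟨u, rfl⟩ := projC_surj a
    have := recon u z
    rw [h] at this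
    simpa using this
  · rintro rfl; exact circDisp_self _

lemma mem_arcIco {a b z : Circle1} : z ∈ arcIco a b ↔ circDisp a z < circDisp a b := Iff.rfl

lemma circDisp_rebase (u : ℝ) (w z : Circle1) :
    circDisp w z = Int.fract (circDisp (projC u) z - circDisp (projC u) w) := by
  conv_lhs => rw [recon u w, recon u z]
  rw [circDisp_proj]
  congr 1
  ring

lemma arc_subset_left {a b b' : Circle1} (h : circDisp a b' ≤ circDisp a b) :
    arcIco a b' ⊆ arcIco a b := fun z hz => lt_of_lt_of_le hz h

lemma arc_subset_right {a a' b : Circle1} (hmem : a ∈ arcIco a' b) :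
    arcIco a b ⊆ arcIco a' b := by
  intro z hz
  obtain ⟨u, hu⟩ := projC_surj a'
  subst hu
  rw [mem_arcIco] at hmem hz ⊢
  set D := circDisp (projC u) a with hD
  set cz := circDisp (projC u) z with hcz
  set cb := circDisp (projC u) b with hcb
  rw [circDisp_rebase u a z, circDisp_rebase u a b] at hz
  have hcb1 : cb < 1 := circDisp_lt_one _ _
  have hcz0 : 0 ≤ cz := circDisp_nonneg _ _
  have hD0 : 0 ≤ D := circDisp_nonneg _ _
  have hfb : Int.fract (cb - D) = cb - D := by
    rw [Int.fract_eq_self]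
    constructor <;> [linarith [hmem]; linarith [hmem]]
  rw [hfb] at hz
  rcases le_or_gt D cz with hc | hc
  · have : Int.fract (cz - D) = cz - D := by
      rw [Int.fract_eq_self]
      constructor
      · linarith
      · linarith [circDisp_lt_one (projC u) z]
    rw [this] at hz
    linarith
  · have : Int.fract (cz - D) = cz - D + 1 := fract_neg_case (by linarith) (by linarith)
    rw [this] at hz
    linarith

lemma arc_disjoint {e₁ b₁ e₂ b₂ : Circle1} (h12 : e₁ ≠ e₂)
    (hb1 : e₂ ∉ arcIco e₁ b₁) (hb2 : e₁ ∉ arcIco e₂ b₂) :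
    Disjoint (arcIco e₁ b₁) (arcIco e₂ b₂) := by
  rw [Set.disjoint_left]
  intro z hz1 hz2
  obtain ⟨u, hu⟩ := projC_surj e₁
  subst hu
  rw [mem_arcIco] at hz1 hz2 hb1 hb2
  set D := circDisp (projC u) e₂ with hD
  set cz := circDisp (projC u) z with hcz
  have hD0 : 0 < D := by
    rcases lt_or_eq_of_le (circDisp_nonneg (projC u) e₂) with h | h
    · exact h
    · exact absurd (circDisp_eq_zero_iff.1 h.symm) (Ne.symm h12)
  have hD1 : D < 1 := circDisp_lt_one _ _
  have hcz0 : 0 ≤ cz := circDisp_nonneg _ _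
  -- from hb1 : ¬ (D < circDisp e₁ b₁), and hz1 : cz < circDisp e₁ b₁
  push_neg at hb1
  have hczD : cz < D := lt_of_lt_of_le hz1 hb1
  -- z in second arc: fract (cz - D) < circDisp e₂ b₂ ≤ circDisp e₂ e₁ = fract (0 - D) = 1 - D
  rw [circDisp_rebase u e₂ z] at hz2
  push_neg at hb2
  have he21 : circDisp e₂ (projC u) = 1 - D := by
    rw [circDisp_rebase u e₂ (projC u), circDisp_self]
    rw [fract_neg_case (x := 0 - D) (by linarith) (by linarith)]
    ring
  rw [he21] at hb2
  have hfz : Int.fract (cz - D) = cz - D + 1 := fract_neg_case (by linarith) (by linarith)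
  rw [hfz] at hz2
  have := lt_of_lt_of_le hz2 hb2
  linarith

end CircleBasic

section Cover

lemma cover_lemma (N : ℕ) (hN : 0 < N) (pts : ℕ → Circle1)
    (hinj : ∀ k l, k < N → l < N → k ≠ l → pts k ≠ pts l)
    (re : ℕ → ℕ) (hre : ∀ k, k < N → re k < N ∧ re k ≠ k) :
    Set.univ ⊆ ⋃ k ∈ Finset.range N, arcIco (pts k) (pts (re k)) := by
  intro z _
  obtain ⟨u, hu⟩ := projC_surj (pts 0)
  have h0S : 0 ∈ (Finset.range N).filter
      (fun k => circDisp (pts 0) (pts k) ≤ circDisp (pts 0) z) := by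
    rw [Finset.mem_filter]
    refine ⟨Finset.mem_range.2 hN, ?_⟩
    rw [circDisp_self]
    exact circDisp_nonneg _ _
  obtain ⟨k₀, hk₀S, hmax⟩ := Finset.exists_max_image _
    (fun k => circDisp (pts 0) (pts k)) ⟨0, h0S⟩
  have hk₀N : k₀ < N := Finset.mem_range.1 (Finset.mem_filter.1 hk₀S).1
  have hk₀le : circDisp (pts 0) (pts k₀) ≤ circDisp (pts 0) z := (Finset.mem_filter.1 hk₀S).2
  obtain ⟨hreN, hrene⟩ := hre k₀ hk₀N
  refine Set.mem_biUnion (Finset.mem_range.2 hk₀N) ?_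
  rw [mem_arcIco]
  by_contra hcon
  push_neg at hcon
  have hrb_z := circDisp_rebase u (pts k₀) z
  have hrb_b := circDisp_rebase u (pts k₀) (pts (re k₀))
  have e1 := recon u (pts (re k₀))
  have e2 := recon u (pts k₀)
  rw [hu] at hrb_z hrb_b e1 e2
  rw [hrb_z, hrb_b] at hcon
  have hce0 : 0 ≤ circDisp (pts 0) (pts k₀) := circDisp_nonneg _ _
  have hce1 : circDisp (pts 0) (pts k₀) < 1 := circDisp_lt_one _ _
  have hcz1 : circDisp (pts 0) z < 1 := circDisp_lt_one _ _
  have hcb0 : 0 ≤ circDisp (pts 0) (pts (re k₀)) := circDisp_nonneg _ _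
  have hcb1 : circDisp (pts 0) (pts (re k₀)) < 1 := circDisp_lt_one _ _
  have hfz : Int.fract (circDisp (pts 0) z - circDisp (pts 0) (pts k₀))
      = circDisp (pts 0) z - circDisp (pts 0) (pts k₀) :=
    Int.fract_eq_self.2 ⟨by linarith, by linarith⟩
  rw [hfz] at hcon
  have hne : circDisp (pts 0) (pts (re k₀)) ≠ circDisp (pts 0) (pts k₀) := by
    intro h
    apply hinj (re k₀) k₀ hreN hk₀N hrene
    rw [e1, e2, h]
  rcases lt_or_gt_of_ne hne with hlt | hgt
  · have hf := fract_neg_case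
      (x := circDisp (pts 0) (pts (re k₀)) - circDisp (pts 0) (pts k₀))
      (by linarith) (by linarith)
    rw [hf] at hcon
    linarith
  · have hf : Int.fract (circDisp (pts 0) (pts (re k₀)) - circDisp (pts 0) (pts k₀))
        = circDisp (pts 0) (pts (re k₀)) - circDisp (pts 0) (pts k₀) :=
      Int.fract_eq_self.2 ⟨by linarith, by linarith⟩
    rw [hf] at hcon
    have hmem : re k₀ ∈ (Finset.range N).filter
        (fun k => circDisp (pts 0) (pts k) ≤ circDisp (pts 0) z) := by
      rw [Finset.mem_filter]
      exact ⟨Finset.mem_range.2 hreN, by linarith⟩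
    have := hmax _ hmem
    linarith

end Cover

section Dyn
variable (H : CircleHomeo)

lemma lift_add_nat (n : ℕ) (x : ℝ) : H.lift (x + n) = H.lift x + n := by
  induction n generalizing x with
  | zero => simp
  | succ n ih =>
    have h1 : x + ((n:ℝ) + 1) = (x + n) + 1 := by ring
    push_cast
    rw [h1, H.lift_add_one, ih]
    ring

lemma lift_add_int (k : ℤ) (x : ℝ) : H.lift (x + k) = H.lift x + k := by
  rcases le_or_gt 0 k with h | h
  · lift k to ℕ using h
    exact_mod_cast lift_add_nat H k x
  · set n : ℕ := (-k).toNat with hn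
    have hkn : (k:ℝ) = -(n:ℝ) := by
      have h' : (n:ℤ) = -k := Int.toNat_of_nonneg (by omega : 0 ≤ -k)
      have : ((n:ℤ):ℝ) = ((-k : ℤ):ℝ) := by exact_mod_cast congrArg (fun z : ℤ => (z:ℝ)) h'
      push_cast at this
      linarith
    have := lift_add_nat H n (x + k)
    rw [hkn] at this ⊢
    rw [show x + -(n:ℝ) + n = x by ring] at this
    linarith

lemma iter_mono (m : ℕ) : StrictMono (H.lift^[m]) := H.lift_strictMono.iterate m

lemma iter_add_int (m : ℕ) (k : ℤ) (x : ℝ) :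
    H.lift^[m] (x + k) = H.lift^[m] x + k := by
  induction m generalizing x with
  | zero => simp
  | succ m ih =>
    rw [Function.iterate_succ_apply, Function.iterate_succ_apply, lift_add_int H k x, ih]

lemma iter_proj (m : ℕ) (x : ℝ) : H.toFun^[m] (projC x) = projC (H.lift^[m] x) := by
  induction m generalizing x with
  | zero => simp
  | succ m ih =>
    rw [Function.iterate_succ_apply, Function.iterate_succ_apply]
    rw [show H.toFun (projC x) = projC (H.lift x) from H.lift_proj x, ih]

lemma ord_base {β : ℝ}
    (hβ : ∀ x : ℝ, Filter.Tendsto (fun n : ℕ => H.lift^[n] x / n) Filter.atTop (nhds β))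
    (q : ℕ) (p : ℤ) (h : (q:ℝ)*β < p) (x : ℝ) : H.lift^[q] x < x + p := by
  by_contra hc
  push_neg at hc
  rcases Nat.eq_zero_or_pos q with rfl | hq
  · simp only [Function.iterate_zero, id_eq] at hc
    have h0 : (0:ℝ) < p := by simpa using h
    linarith
  · have grow : ∀ m : ℕ, x + (m:ℝ)*(p:ℝ) ≤ H.lift^[q*m] x := by
      intro m
      induction m with
      | zero => simp
      | succ m ih =>
        have h1 : H.lift^[q*(m+1)] x = H.lift^[q] (H.lift^[q*m] x) := by
          rw [show q*(m+1) = q + q*m by ring, Function.iterate_add_apply]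
        have h2 : H.lift^[q] (x + (m:ℝ)*(p:ℝ)) ≤ H.lift^[q] (H.lift^[q*m] x) := by
          apply (iter_mono H q).monotone
          exact ih
        have h3 : x + (m:ℝ)*(p:ℝ) + p ≤ H.lift^[q] (x + (m:ℝ)*(p:ℝ)) := by
          have hcomm : H.lift^[q] (x + ((m*p : ℤ):ℝ)) = H.lift^[q] x + ((m*p:ℤ):ℝ) :=
            iter_add_int H q (m*p) x
          push_cast at hcomm
          rw [hcomm]
          linarith
        rw [h1]
        push_cast
        linarith
    have hTq : Filter.Tendsto (fun m : ℕ => q*m) Filter.atTop Filter.atTop := by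
      apply Filter.tendsto_atTop_mono (f := fun m : ℕ => m)
      · intro m; exact Nat.le_mul_of_pos_left m hq
      · exact Filter.tendsto_id
    have h1 : Filter.Tendsto (fun m : ℕ => H.lift^[q*m] x / ((q*m : ℕ):ℝ))
        Filter.atTop (nhds β) := (hβ x).comp hTq
    have h2 : Filter.Tendsto (fun m : ℕ => (x + (m:ℝ)*(p:ℝ)) / ((q*m : ℕ):ℝ))
        Filter.atTop (nhds ((p:ℝ)/q)) := by
      have hx0 : Filter.Tendsto (fun m : ℕ => x / ((q*m:ℕ):ℝ)) Filter.atTop (nhds 0) :=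
        (tendsto_const_div_atTop_nhds_zero_nat x).comp hTq
      have hsum : Filter.Tendsto (fun m : ℕ => x / ((q*m:ℕ):ℝ) + (p:ℝ)/q) Filter.atTop
          (nhds (0 + (p:ℝ)/q)) := hx0.add tendsto_const_nhds
      rw [zero_add] at hsum
      apply hsum.congr'
      filter_upwards [Filter.eventually_ge_atTop 1] with m hm
      have hq0 : (q:ℝ) ≠ 0 := by positivity
      have hmm : (m:ℝ) ≠ 0 := by
        have h' : (0:ℕ) < m := hm
        positivity
      push_cast
      field_simp
    have hle : ∀ᶠ m : ℕ in Filter.atTop,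
        (x + (m:ℝ)*(p:ℝ)) / ((q*m : ℕ):ℝ) ≤ H.lift^[q*m] x / ((q*m : ℕ):ℝ) := by
      filter_upwards [Filter.eventually_ge_atTop 1] with m hm
      have hpos : (0:ℝ) < ((q*m:ℕ):ℝ) := by
        have h' : 0 < q*m := Nat.mul_pos hq hm
        exact_mod_cast h'
      exact (div_le_div_iff_of_pos_right hpos).2 (grow m)
    have hfin : (p:ℝ)/q ≤ β := le_of_tendsto_of_tendsto h2 h1 hle
    have hlt : β < (p:ℝ)/q := by
      rw [lt_div_iff₀ (by positivity : (0:ℝ) < (q:ℝ))]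
      linarith
    linarith

end Dyn

section Ord2
variable (H : CircleHomeo) {β : ℝ}

lemma ord_base' (hβ : ∀ x : ℝ, Filter.Tendsto (fun n : ℕ => H.lift^[n] x / n) Filter.atTop (nhds β))
    (q : ℕ) (p : ℤ) (h : (p:ℝ) < (q:ℝ)*β) (x : ℝ) : x + p < H.lift^[q] x := by
  by_contra hc
  push_neg at hc
  rcases Nat.eq_zero_or_pos q with rfl | hq
  · simp only [Function.iterate_zero, id_eq] at hc
    have h0 : (p:ℝ) < 0 := by simpa using h
    linarith
  · have grow : ∀ m : ℕ, H.lift^[q*m] x ≤ x + (m:ℝ)*(p:ℝ) := by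
      intro m
      induction m with
      | zero => simp
      | succ m ih =>
        have h1 : H.lift^[q*(m+1)] x = H.lift^[q] (H.lift^[q*m] x) := by
          rw [show q*(m+1) = q + q*m by ring, Function.iterate_add_apply]
        have h2 : H.lift^[q] (H.lift^[q*m] x) ≤ H.lift^[q] (x + (m:ℝ)*(p:ℝ)) := by
          apply (iter_mono H q).monotone
          exact ih
        have h3 : H.lift^[q] (x + (m:ℝ)*(p:ℝ)) ≤ x + (m:ℝ)*(p:ℝ) + p := by
          have hcomm : H.lift^[q] (x + ((m*p : ℤ):ℝ)) = H.lift^[q] x + ((m*p:ℤ):ℝ) :=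
            iter_add_int H q (m*p) x
          push_cast at hcomm
          rw [hcomm]
          linarith
        rw [h1]
        push_cast
        linarith
    have hTq : Filter.Tendsto (fun m : ℕ => q*m) Filter.atTop Filter.atTop := by
      apply Filter.tendsto_atTop_mono (f := fun m : ℕ => m)
      · intro m; exact Nat.le_mul_of_pos_left m hq
      · exact Filter.tendsto_id
    have h1 : Filter.Tendsto (fun m : ℕ => H.lift^[q*m] x / ((q*m : ℕ):ℝ))
        Filter.atTop (nhds β) := (hβ x).comp hTq
    have h2 : Filter.Tendsto (fun m : ℕ => (x + (m:ℝ)*(p:ℝ)) / ((q*m : ℕ):ℝ))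
        Filter.atTop (nhds ((p:ℝ)/q)) := by
      have hx0 : Filter.Tendsto (fun m : ℕ => x / ((q*m:ℕ):ℝ)) Filter.atTop (nhds 0) :=
        (tendsto_const_div_atTop_nhds_zero_nat x).comp hTq
      have hsum : Filter.Tendsto (fun m : ℕ => x / ((q*m:ℕ):ℝ) + (p:ℝ)/q) Filter.atTop
          (nhds (0 + (p:ℝ)/q)) := hx0.add tendsto_const_nhds
      rw [zero_add] at hsum
      apply hsum.congr'
      filter_upwards [Filter.eventually_ge_atTop 1] with m hm
      have hq0 : (q:ℝ) ≠ 0 := by positivity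
      have hmm : (m:ℝ) ≠ 0 := by
        have h' : (0:ℕ) < m := hm
        positivity
      push_cast
      field_simp
    have hle : ∀ᶠ m : ℕ in Filter.atTop,
        H.lift^[q*m] x / ((q*m : ℕ):ℝ) ≤ (x + (m:ℝ)*(p:ℝ)) / ((q*m : ℕ):ℝ) := by
      filter_upwards [Filter.eventually_ge_atTop 1] with m hm
      have hpos : (0:ℝ) < ((q*m:ℕ):ℝ) := by
        have h' : 0 < q*m := Nat.mul_pos hq hm
        exact_mod_cast h'
      exact (div_le_div_iff_of_pos_right hpos).2 (grow m)
    have hfin : β ≤ (p:ℝ)/q := le_of_tendsto_of_tendsto h1 h2 hle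
    have hlt : (p:ℝ)/q < β := by
      rw [div_lt_iff₀ (by positivity : (0:ℝ) < (q:ℝ))]
      linarith
    linarith

lemma ord (hβ : ∀ x : ℝ, Filter.Tendsto (fun n : ℕ => H.lift^[n] x / n) Filter.atTop (nhds β))
    (i j : ℕ) (p : ℤ) (h : (i:ℝ)*β < (j:ℝ)*β + p) (x : ℝ) :
    H.lift^[i] x < H.lift^[j] x + p := by
  rcases le_or_gt j i with hij | hij
  · obtain ⟨d, rfl⟩ := Nat.exists_eq_add_of_le hij
    have h' : (d:ℝ)*β < p := by push_cast at h; linarith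
    have := ord_base H hβ d p h' (H.lift^[j] x)
    rw [show j + d = d + j by ring, Function.iterate_add_apply]
    exact this
  · obtain ⟨d, rfl⟩ := Nat.exists_eq_add_of_le hij.le
    have h' : ((-p : ℤ):ℝ) < (d:ℝ)*β := by push_cast at h ⊢; linarith
    have := ord_base' H hβ d (-p) h' (H.lift^[i] x)
    rw [show i + d = d + i by ring, Function.iterate_add_apply]
    push_cast at this
    linarith

end Ord2

section Cmpl
variable {β α : ℝ}

lemma fract_jbeta (hfract : Int.fract β = α) (j : ℤ) :
    Int.fract ((j:ℝ)*β) = Int.fract ((j:ℝ)*α) := by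
  have hb : β = (⌊β⌋ : ℝ) + α := by rw [← hfract, Int.fract]; ring
  have h : (j:ℝ)*β = (j:ℝ)*α + ((j*⌊β⌋ : ℤ):ℝ) := by
    push_cast
    linear_combination (j:ℝ) * hb
  rw [h, Int.fract_add_intCast]

lemma jbeta_irr (hfract : Int.fract β = α) (hirr : Irrational α) (j : ℤ) (hj : j ≠ 0) :
    Irrational ((j:ℝ)*β) := by
  have hb : β = (⌊β⌋ : ℝ) + α := by rw [← hfract, Int.fract]; ring
  have h1 : Irrational ((j:ℝ)*α) := hirr.intCast_mul hj
  have h : (j:ℝ)*β = ((j*⌊β⌋ : ℤ):ℝ) + (j:ℝ)*α := by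
    push_cast
    linear_combination (j:ℝ) * hb
  rw [h]
  exact h1.intCast_add _

variable (H : CircleHomeo)

lemma circ_formula
    (hβ : ∀ x : ℝ, Filter.Tendsto (fun n : ℕ => H.lift^[n] x / n) Filter.atTop (nhds β))
    (hfract : Int.fract β = α) (hirr : Irrational α) (s0 : ℝ) (i k : ℕ) (hne : k ≠ i) :
    circDisp (projC (H.lift^[i] s0)) (projC (H.lift^[k] s0))
      = H.lift^[k] s0 - H.lift^[i] s0 - (⌊(((k:ℤ) - (i:ℤ) : ℤ):ℝ)*β⌋ : ℤ) := by
  have hj0 : ((k:ℤ) - (i:ℤ)) ≠ 0 := by omega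
  have hirrjβ := jbeta_irr hfract hirr _ hj0
  have hup : H.lift^[k] s0 < H.lift^[i] s0 + ((⌊(((k:ℤ) - (i:ℤ) : ℤ):ℝ)*β⌋ + 1 : ℤ):ℝ) := by
    apply ord H hβ k i _ ?_ s0
    have h1 := Int.lt_floor_add_one ((((k:ℤ) - (i:ℤ) : ℤ):ℝ)*β)
    push_cast at h1 ⊢
    linarith
  have hlo : H.lift^[i] s0 < H.lift^[k] s0 + ((-⌊(((k:ℤ) - (i:ℤ) : ℤ):ℝ)*β⌋ : ℤ):ℝ) := by
    apply ord H hβ i k _ ?_ s0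
    have h1 : ((⌊(((k:ℤ) - (i:ℤ) : ℤ):ℝ)*β⌋ : ℤ):ℝ) < (((k:ℤ) - (i:ℤ) : ℤ):ℝ)*β :=
      lt_of_le_of_ne (Int.floor_le _) (Ne.symm (hirrjβ.ne_int _))
    push_cast at h1 ⊢
    linarith
  rw [circDisp_proj]
  have hy : H.lift^[k] s0 - H.lift^[i] s0 - ((⌊(((k:ℤ) - (i:ℤ) : ℤ):ℝ)*β⌋ : ℤ):ℝ)
      ∈ Set.Ico (0:ℝ) 1 := by
    constructor
    · push_cast at hlo ⊢; linarith
    · push_cast at hup ⊢; linarith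
  rw [← Int.fract_sub_intCast (H.lift^[k] s0 - H.lift^[i] s0) ⌊(((k:ℤ) - (i:ℤ) : ℤ):ℝ)*β⌋,
    Int.fract_eq_self.2 hy]

lemma cmpl
    (hβ : ∀ x : ℝ, Filter.Tendsto (fun n : ℕ => H.lift^[n] x / n) Filter.atTop (nhds β))
    (hfract : Int.fract β = α) (hirr : Irrational α) (s0 : ℝ) (s t k : ℕ)
    (hk : k ≠ s) (ht : t ≠ s)
    (h : Int.fract ((((k:ℤ)-(s:ℤ) : ℤ):ℝ)*α) < Int.fract ((((t:ℤ)-(s:ℤ) : ℤ):ℝ)*α)) :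
    circDisp (projC (H.lift^[s] s0)) (projC (H.lift^[k] s0))
      < circDisp (projC (H.lift^[s] s0)) (projC (H.lift^[t] s0)) := by
  rw [circ_formula H hβ hfract hirr s0 s k hk, circ_formula H hβ hfract hirr s0 s t ht]
  have h1 : Int.fract ((((k:ℤ)-(s:ℤ) : ℤ):ℝ)*β) < Int.fract ((((t:ℤ)-(s:ℤ) : ℤ):ℝ)*β) := by
    rw [fract_jbeta hfract, fract_jbeta hfract]; exact h
  rw [Int.fract, Int.fract] at h1
  have hord := ord H hβ k t
    (⌊(((k:ℤ)-(s:ℤ) : ℤ):ℝ)*β⌋ - ⌊(((t:ℤ)-(s:ℤ) : ℤ):ℝ)*β⌋) ?_ s0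
  · push_cast at hord ⊢
    linarith
  · push_cast
    push_cast at h1
    linarith

end Cmpl

section Image
variable (H : CircleHomeo)

lemma image_arc (a b : Circle1) :
    H.toFun '' arcIco a b = arcIco (H.toFun a) (H.toFun b) := by
  have hmono := H.lift_strictMono
  have key : ∀ z : Circle1, H.toFun z ∈ arcIco (H.toFun a) (H.toFun b) ↔ z ∈ arcIco a b := by
    intro z
    obtain ⟨u, hu⟩ := projC_surj a
    subst hu
    have hb := recon u b
    have hz := recon u z
    rw [mem_arcIco, mem_arcIco]
    rcases eq_or_ne b (projC u) with rfl | hne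
    · simp only [circDisp_self]
      constructor <;> intro h <;> exact absurd h (not_lt.2 (circDisp_nonneg _ _))
    · have hcb0 : 0 < circDisp (projC u) b := by
        rcases (circDisp_nonneg (projC u) b).lt_or_eq with h | h
        · exact h
        · exact absurd (circDisp_eq_zero_iff.1 h.symm) hne
      have hfa : H.toFun (projC u) = projC (H.lift u) := H.lift_proj u
      have hfz : H.toFun z = projC (H.lift (u + circDisp (projC u) z)) := by
        conv_lhs => rw [hz]
        exact H.lift_proj _
      have hfb : H.toFun b = projC (H.lift (u + circDisp (projC u) b)) := by
        conv_lhs => rw [hb]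
        exact H.lift_proj _
      rw [hfa, hfz, hfb, circDisp_proj, circDisp_proj]
      have hself : ∀ c : ℝ, 0 ≤ c → c < 1 →
          Int.fract (H.lift (u + c) - H.lift u) = H.lift (u + c) - H.lift u := by
        intro c hc0 hc1
        apply Int.fract_eq_self.2
        constructor
        · have : H.lift u ≤ H.lift (u + c) := hmono.monotone (by linarith)
          linarith
        · have h1 : H.lift (u + c) < H.lift (u + 1) := hmono (by linarith)
          have h2 : H.lift (u + 1) = H.lift u + 1 := H.lift_add_one u
          linarith
      rw [hself _ (circDisp_nonneg _ _) (circDisp_lt_one _ _),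
        hself _ (circDisp_nonneg _ _) (circDisp_lt_one _ _)]
      constructor
      · intro h
        have := hmono.lt_iff_lt.1 (by linarith : H.lift (u + circDisp (projC u) z) < H.lift (u + circDisp (projC u) b))
        linarith
      · intro h
        have : H.lift (u + circDisp (projC u) z) < H.lift (u + circDisp (projC u) b) :=
          hmono (by linarith)
        linarith
  ext w
  constructor
  · rintro ⟨z, hz, rfl⟩
    exact (key z).2 hz
  · intro hw
    refine ⟨H.toHomeo.symm w, ?_, ?_⟩
    · have hsy : H.toFun (H.toHomeo.symm w) = w := H.toHomeo.apply_symm_apply w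
      rw [← hsy] at hw
      exact (key _).1 hw
    · exact H.toHomeo.apply_symm_apply w

lemma image_arc_iter (m : ℕ) (a b : Circle1) :
    H.toFun^[m] '' arcIco a b = arcIco (H.toFun^[m] a) (H.toFun^[m] b) := by
  induction m with
  | zero => simp
  | succ m ih =>
    rw [Function.iterate_succ', Set.image_comp, ih, image_arc]
    rfl

lemma measurable_circDisp (a : Circle1) : Measurable (fun z => circDisp a z) := by
  have h1 : Measurable (fun z : Circle1 => z - a) :=
    (continuous_id.sub continuous_const).measurable
  have h2 : Measurable (fun w : Circle1 => ((AddCircle.equivIco 1 0 w : Set.Ico (0:ℝ) (0+1))) : Circle1 → ℝ) := by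
    have hm := (AddCircle.measurableEquivIco (T := 1) 0).measurable
    exact measurable_subtype_coe.comp hm
  exact h2.comp h1

lemma measurableSet_arcIco (a b : Circle1) : MeasurableSet (arcIco a b) :=
  (measurable_circDisp a) measurableSet_Iio

lemma symm_leftInv (m : ℕ) (z : Circle1) :
    (⇑(H.toHomeo.symm))^[m] (H.toFun^[m] z) = z := by
  have h : Function.LeftInverse (⇑(H.toHomeo.symm)) H.toFun := H.toHomeo.symm_apply_apply
  exact (h.iterate m) z

lemma symm_rightInv (m : ℕ) (w : Circle1) :
    H.toFun^[m] ((⇑(H.toHomeo.symm))^[m] w) = w := by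
  have h : Function.RightInverse (⇑(H.toHomeo.symm)) H.toFun := H.toHomeo.apply_symm_apply
  exact (h.iterate m) w

lemma image_iter_eq_preimage (m : ℕ) (S : Set Circle1) :
    H.toFun^[m] '' S = (⇑(H.toHomeo.symm))^[m] ⁻¹' S := by
  ext w
  constructor
  · rintro ⟨z, hz, rfl⟩
    rw [Set.mem_preimage, symm_leftInv]
    exact hz
  · intro hw
    exact ⟨(⇑(H.toHomeo.symm))^[m] w, hw, symm_rightInv H m w⟩

lemma measurable_image_iter (m : ℕ) {S : Set Circle1} (hS : MeasurableSet S) :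
    MeasurableSet (H.toFun^[m] '' S) := by
  rw [image_iter_eq_preimage]
  exact hS.preimage (H.toHomeo.symm.continuous.iterate m).measurable

lemma meas_image_iter {μ : Measure Circle1} (hμ : μ.map H.toFun = μ) (m : ℕ)
    {S : Set Circle1} (hS : MeasurableSet S) : μ (H.toFun^[m] '' S) = μ S := by
  induction m with
  | zero => simp
  | succ m ih =>
    rw [Function.iterate_succ', Set.image_comp]
    have hmeas : MeasurableSet (H.toFun^[m] '' S) := measurable_image_iter H m hS
    have h1 : μ (H.toFun '' (H.toFun^[m] '' S)) = μ (H.toFun^[m] '' S) := by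
      have himg : MeasurableSet (H.toFun '' (H.toFun^[m] '' S)) := by
        have := measurable_image_iter H 1 hmeas
        simpa using this
      calc μ (H.toFun '' (H.toFun^[m] '' S)) = (μ.map H.toFun) (H.toFun '' (H.toFun^[m] '' S)) := by rw [hμ]
      _ = μ (H.toFun ⁻¹' (H.toFun '' (H.toFun^[m] '' S))) :=
        Measure.map_apply H.toHomeo.continuous.measurable himg
      _ = μ (H.toFun^[m] '' S) := by
        have hinj : Function.Injective H.toFun := fun a b hab => H.toHomeo.injective hab
        rw [Set.preimage_image_eq _ hinj]
    rw [h1, ih]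

end Image

end AuxCirc


noncomputable section AuxMain

open DynPart

section MainCtx
variable (H : CircleHomeo) {α β : ℝ} (x0 : Circle1) (s0 : ℝ)

lemma pt_proj (hs0 : projC s0 = x0) (i : ℕ) :
    DynPart.pt H x0 i = projC (H.lift^[i] s0) := by
  rw [DynPart.pt, ← hs0, iter_proj]

lemma pt_zero : DynPart.pt H x0 0 = x0 := rfl

lemma pt_iter (i k : ℕ) : H.toFun^[i] (DynPart.pt H x0 k) = DynPart.pt H x0 (i + k) := by
  rw [DynPart.pt, DynPart.pt, ← Function.iterate_add_apply]

lemma pt_ne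
    (hβ : ∀ x : ℝ, Filter.Tendsto (fun n : ℕ => H.lift^[n] x / n) Filter.atTop (nhds β))
    (hfract : Int.fract β = α) (hirr : Irrational α) (hs0 : projC s0 = x0)
    (i k : ℕ) (hki : k ≠ i) : DynPart.pt H x0 k ≠ DynPart.pt H x0 i := by
  have hform := circ_formula H hβ hfract hirr s0 i k hki
  have hj0 : ((k:ℤ) - (i:ℤ)) ≠ 0 := by omega
  have h1 : ((⌊(((k:ℤ)-(i:ℤ):ℤ):ℝ)*β⌋ : ℤ):ℝ) < (((k:ℤ)-(i:ℤ):ℤ):ℝ)*β :=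
    lt_of_le_of_ne (Int.floor_le _) (Ne.symm ((jbeta_irr hfract hirr _ hj0).ne_int _))
  have hlo := ord H hβ i k (-⌊(((k:ℤ)-(i:ℤ):ℤ):ℝ)*β⌋) (by push_cast at h1 ⊢; linarith) s0
  intro heq
  rw [pt_proj H x0 s0 hs0, pt_proj H x0 s0 hs0] at heq
  have h0 : circDisp (projC (H.lift^[i] s0)) (projC (H.lift^[k] s0)) = 0 :=
    circDisp_eq_zero_iff.2 heq
  rw [hform] at h0
  push_cast at hlo h0
  linarith

lemma Ini_arc (m i : ℕ) :
    DynPart.Ini H α x0 m i = if Even m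
      then arcIco (DynPart.pt H x0 i) (DynPart.pt H x0 (i + cfQ α m))
      else arcIco (DynPart.pt H x0 (i + cfQ α m)) (DynPart.pt H x0 i) := by
  rw [DynPart.Ini, DynPart.In]
  rcases Nat.even_or_odd m with he | ho
  · rw [if_pos he, if_pos he, image_arc_iter, pt_iter H x0 i (cfQ α m)]
    rfl
  · rw [if_neg (Nat.not_even_iff_odd.2 ho), if_neg (Nat.not_even_iff_odd.2 ho),
      image_arc_iter, pt_iter H x0 i (cfQ α m)]
    rfl

lemma In_eq_Ini (m : ℕ) : DynPart.In H α x0 m = DynPart.Ini H α x0 m 0 := by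
  rw [DynPart.Ini]
  simp

lemma In_meas (m : ℕ) : MeasurableSet (DynPart.In H α x0 m) := by
  rw [DynPart.In]
  rcases Nat.even_or_odd m with he | ho
  · rw [if_pos he]; exact measurableSet_arcIco _ _
  · rw [if_neg (Nat.not_even_iff_odd.2 ho)]; exact measurableSet_arcIco _ _

lemma Ini_meas (m i : ℕ) : MeasurableSet (DynPart.Ini H α x0 m i) :=
  measurable_image_iter H i (In_meas H x0 m)

lemma cmpl_pt
    (hβ : ∀ x : ℝ, Filter.Tendsto (fun n : ℕ => H.lift^[n] x / n) Filter.atTop (nhds β))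
    (hfract : Int.fract β = α) (hirr : Irrational α) (hs0 : projC s0 = x0)
    (s t k : ℕ) (hk : k ≠ s) (ht : t ≠ s)
    (h : Int.fract ((((k:ℤ)-(s:ℤ) : ℤ):ℝ)*α) < Int.fract ((((t:ℤ)-(s:ℤ) : ℤ):ℝ)*α)) :
    circDisp (DynPart.pt H x0 s) (DynPart.pt H x0 k)
      < circDisp (DynPart.pt H x0 s) (DynPart.pt H x0 t) := by
  rw [pt_proj H x0 s0 hs0, pt_proj H x0 s0 hs0, pt_proj H x0 s0 hs0]
  exact cmpl H hβ hfract hirr s0 s t k hk ht h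


lemma gap
    (hβ : ∀ x : ℝ, Filter.Tendsto (fun n : ℕ => H.lift^[n] x / n) Filter.atTop (nhds β))
    (hfract : Int.fract β = α) (hirr : Irrational α) (h01 : α ∈ Set.Ioo (0:ℝ) 1)
    (hs0 : projC s0 = x0)
    (L i k : ℕ) (hiL : i < cfQ α (L+1)) (hkN : k < cfQ α (L+1) + cfQ α L)
    (hne : k ≠ (if Even L then i else i + cfQ α L)) :
    DynPart.pt H x0 k ∉ DynPart.Ini H α x0 L i := by
  have hqL := cfQ_pos hirr h01 L
  have hqL1 := cfQ_pos hirr h01 (L+1)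
  intro hmem
  rw [Ini_arc] at hmem
  rcases Nat.even_or_odd L with hev | hod
  · rw [if_pos hev] at hmem
    rw [if_pos hev] at hne
    rcases eq_or_ne k (i + cfQ α L) with rfl | hkt
    · exact lt_irrefl _ (mem_arcIco.1 hmem)
    · have hsg : (-1:ℝ)^L = 1 := Even.neg_one_pow hev
      have hlen : Int.fract (((((i + cfQ α L : ℕ):ℤ) - (i:ℤ) : ℤ):ℝ)*α) = PiG α L := by
        have hA := factA hirr h01 L
        rw [hsg, one_mul] at hA
        rw [← hA]
        congr 1
        push_cast
        ring
      have hgt : PiG α L < Int.fract ((((k:ℤ)-(i:ℤ) : ℤ):ℝ)*α) := by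
        have hcor := cor hirr h01 L ((k:ℤ) - i) (by omega) (by omega) (by omega) (by omega)
        rw [hsg, one_mul] at hcor
        exact hcor
      have hlt := cmpl_pt H x0 s0 hβ hfract hirr hs0 i k (i + cfQ α L)
        (by omega) (by omega) (by rw [hlen]; exact hgt)
      exact lt_asymm hlt (mem_arcIco.1 hmem)
  · rw [if_neg (Nat.not_even_iff_odd.2 hod)] at hmem
    rw [if_neg (Nat.not_even_iff_odd.2 hod)] at hne
    rcases eq_or_ne k i with rfl | hkt
    · exact lt_irrefl _ (mem_arcIco.1 hmem)
    · have hsg : (-1:ℝ)^L = -1 := Odd.neg_one_pow hod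
      have hlen : Int.fract ((((i:ℤ) - ((i + cfQ α L : ℕ):ℤ) : ℤ):ℝ)*α) = PiG α L := by
        have hA := factA hirr h01 L
        rw [hsg] at hA
        rw [← hA]
        congr 1
        push_cast
        ring
      have hgt : PiG α L < Int.fract ((((k:ℤ) - ((i + cfQ α L : ℕ):ℤ) : ℤ):ℝ)*α) := by
        have hcor := cor hirr h01 L (((i:ℤ) + cfQ α L) - k) (by omega) (by omega)
          (by omega) (by omega)
        rw [hsg] at hcor
        have harg : (-1:ℝ) * ((((((i:ℤ) + cfQ α L) - k : ℤ)):ℝ) * α)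
            = ((((k:ℤ) - ((i + cfQ α L : ℕ):ℤ) : ℤ)):ℝ)*α := by
          push_cast
          ring
        rw [harg] at hcor
        exact hcor
      have hlt := cmpl_pt H x0 s0 hβ hfract hirr hs0 (i + cfQ α L) k i
        (by omega) (by omega) (by rw [hlen]; exact hgt)
      exact lt_asymm hlt (mem_arcIco.1 hmem)


lemma Ini_arc' (m i : ℕ) : DynPart.Ini H α x0 m i
    = arcIco (DynPart.pt H x0 (if Even m then i else i + cfQ α m))
             (DynPart.pt H x0 (if Even m then i + cfQ α m else i)) := by
  rw [Ini_arc]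
  rcases Nat.even_or_odd m with he | ho
  · rw [if_pos he, if_pos he, if_pos he]
  · rw [if_neg (Nat.not_even_iff_odd.2 ho), if_neg (Nat.not_even_iff_odd.2 ho),
      if_neg (Nat.not_even_iff_odd.2 ho)]

lemma part_disj
    (hβ : ∀ x : ℝ, Filter.Tendsto (fun n : ℕ => H.lift^[n] x / n) Filter.atTop (nhds β))
    (hfract : Int.fract β = α) (hirr : Irrational α) (h01 : α ∈ Set.Ioo (0:ℝ) 1)
    (hs0 : projC s0 = x0)
    (l : ℕ) {L i L' i' : ℕ}
    (hA : (L = l ∧ i < cfQ α (l+1)) ∨ (L = l + 1 ∧ i < cfQ α l))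
    (hB : (L' = l ∧ i' < cfQ α (l+1)) ∨ (L' = l + 1 ∧ i' < cfQ α l))
    (hne : ¬(L = L' ∧ i = i')) :
    Disjoint (DynPart.Ini H α x0 L i) (DynPart.Ini H α x0 L' i') := by
  have hm1 := cfQ_mono hirr h01 l
  have hm2 := cfQ_mono hirr h01 (l+1)
  have hp1 := cfQ_pos hirr h01 l
  have hp2 := cfQ_pos hirr h01 (l+1)
  have hiL : i < cfQ α (L+1) := by rcases hA with ⟨rfl, h⟩ | ⟨rfl, h⟩ <;> omega
  have hiL' : i' < cfQ α (L'+1) := by rcases hB with ⟨rfl, h⟩ | ⟨rfl, h⟩ <;> omega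
  have heneq : (if Even L' then i' else i' + cfQ α L')
      ≠ (if Even L then i else i + cfQ α L) := by
    rcases Nat.even_or_odd l with hev | hod
    · have hev1 : ¬ Even (l+1) := by
        rw [Nat.even_add_one]
        exact fun h => h hev
      rcases hA with ⟨rfl, h⟩ | ⟨rfl, h⟩ <;> rcases hB with ⟨rfl, h'⟩ | ⟨rfl, h'⟩
      · have hii : i ≠ i' := fun hh => hne ⟨rfl, hh⟩
        rw [if_pos hev, if_pos hev]; omega
      · rw [if_neg hev1, if_pos hev]; omega
      · rw [if_pos hev, if_neg hev1]; omega
      · have hii : i ≠ i' := fun hh => hne ⟨rfl, hh⟩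
        rw [if_neg hev1, if_neg hev1]; omega
    · have hod' : ¬ Even l := Nat.not_even_iff_odd.2 hod
      have hev1 : Even (l+1) := Nat.even_add_one.2 hod'
      rcases hA with ⟨rfl, h⟩ | ⟨rfl, h⟩ <;> rcases hB with ⟨rfl, h'⟩ | ⟨rfl, h'⟩
      · have hii : i ≠ i' := fun hh => hne ⟨rfl, hh⟩
        rw [if_neg hod', if_neg hod']; omega
      · rw [if_pos hev1, if_neg hod']; omega
      · rw [if_neg hod', if_pos hev1]; omega
      · have hii : i ≠ i' := fun hh => hne ⟨rfl, hh⟩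
        rw [if_pos hev1, if_pos hev1]; omega
  have hkN1 : (if Even L' then i' else i' + cfQ α L') < cfQ α (L+1) + cfQ α L := by
    rcases Nat.even_or_odd l with hev | hod
    · have hev1 : ¬ Even (l+1) := by
        rw [Nat.even_add_one]
        exact fun h => h hev
      rcases hA with ⟨rfl, h⟩ | ⟨rfl, h⟩ <;> rcases hB with ⟨rfl, h'⟩ | ⟨rfl, h'⟩ <;>
        simp only [if_pos hev, if_neg hev1] <;> omega
    · have hod' : ¬ Even l := Nat.not_even_iff_odd.2 hod
      have hev1 : Even (l+1) := Nat.even_add_one.2 hod'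
      rcases hA with ⟨rfl, h⟩ | ⟨rfl, h⟩ <;> rcases hB with ⟨rfl, h'⟩ | ⟨rfl, h'⟩ <;>
        simp only [if_pos hev1, if_neg hod'] <;> omega
  have hkN2 : (if Even L then i else i + cfQ α L) < cfQ α (L'+1) + cfQ α L' := by
    rcases Nat.even_or_odd l with hev | hod
    · have hev1 : ¬ Even (l+1) := by
        rw [Nat.even_add_one]
        exact fun h => h hev
      rcases hA with ⟨rfl, h⟩ | ⟨rfl, h⟩ <;> rcases hB with ⟨rfl, h'⟩ | ⟨rfl, h'⟩ <;>
        simp only [if_pos hev, if_neg hev1] <;> omega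
    · have hod' : ¬ Even l := Nat.not_even_iff_odd.2 hod
      have hev1 : Even (l+1) := Nat.even_add_one.2 hod'
      rcases hA with ⟨rfl, h⟩ | ⟨rfl, h⟩ <;> rcases hB with ⟨rfl, h'⟩ | ⟨rfl, h'⟩ <;>
        simp only [if_pos hev1, if_neg hod'] <;> omega
  rw [Ini_arc' H x0 L i, Ini_arc' H x0 L' i']
  apply arc_disjoint
  · exact pt_ne H x0 s0 hβ hfract hirr hs0 _ _ (Ne.symm heneq)
  · rw [← Ini_arc']
    exact gap H x0 s0 hβ hfract hirr h01 hs0 L i _ hiL hkN1 heneq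
  · rw [← Ini_arc']
    exact gap H x0 s0 hβ hfract hirr h01 hs0 L' i' _ hiL' hkN2 (Ne.symm heneq)


lemma partition_cover
    (hβ : ∀ x : ℝ, Filter.Tendsto (fun n : ℕ => H.lift^[n] x / n) Filter.atTop (nhds β))
    (hfract : Int.fract β = α) (hirr : Irrational α) (h01 : α ∈ Set.Ioo (0:ℝ) 1)
    (hs0 : projC s0 = x0) (l : ℕ) :
    Set.univ ⊆ (⋃ i ∈ Finset.range (cfQ α (l+1)), DynPart.Ini H α x0 l i) ∪
      (⋃ j ∈ Finset.range (cfQ α l), DynPart.Ini H α x0 (l+1) j) := by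
  have hp1 := cfQ_pos hirr h01 l
  have hp2 := cfQ_pos hirr h01 (l+1)
  set N := cfQ α (l+1) + cfQ α l with hN
  set re : ℕ → ℕ := fun k =>
    if Even l then (if k < cfQ α (l+1) then k + cfQ α l else k - cfQ α (l+1))
    else (if k < cfQ α l then k + cfQ α (l+1) else k - cfQ α l) with hredef
  have hcov := cover_lemma N (by omega) (DynPart.pt H x0)
    (fun a b _ _ hab => pt_ne H x0 s0 hβ hfract hirr hs0 b a hab)
    re
    (by
      intro k hk
      rw [hredef]
      rcases Nat.even_or_odd l with hev | hod
      · simp only [if_pos hev]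
        by_cases h : k < cfQ α (l+1) <;> simp only [if_pos, if_neg, h, ite_true, ite_false] <;> omega
      · simp only [if_neg (Nat.not_even_iff_odd.2 hod)]
        by_cases h : k < cfQ α l <;> simp only [h, ite_true, ite_false] <;> omega)
  intro z hz
  obtain ⟨k, hkmem, hzarc⟩ := Set.mem_iUnion₂.1 (hcov hz)
  have hkN : k < N := Finset.mem_range.1 hkmem
  rcases Nat.even_or_odd l with hev | hod
  · have hod1 : ¬ Even (l+1) := by
      rw [Nat.even_add_one]
      exact fun h => h hev
    by_cases hk : k < cfQ α (l+1)
    · have hrek : re k = k + cfQ α l := by rw [hredef]; simp [if_pos hev, hk]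
      refine Or.inl (Set.mem_biUnion (Finset.mem_range.2 hk) ?_)
      rw [Ini_arc', if_pos hev, if_pos hev]
      rw [hrek] at hzarc
      exact hzarc
    · have hj : k - cfQ α (l+1) < cfQ α l := by omega
      have hrek : re k = k - cfQ α (l+1) := by rw [hredef]; simp [if_pos hev, hk]
      refine Or.inr (Set.mem_biUnion (Finset.mem_range.2 hj) ?_)
      rw [Ini_arc', if_neg hod1, if_neg hod1]
      have hidx : k - cfQ α (l+1) + cfQ α (l+1) = k := by omega
      rw [hidx]
      rw [hrek] at hzarc
      exact hzarc
  · have hod' : ¬ Even l := Nat.not_even_iff_odd.2 hod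
    have hev1 : Even (l+1) := Nat.even_add_one.2 hod'
    by_cases hk : k < cfQ α l
    · have hrek : re k = k + cfQ α (l+1) := by rw [hredef]; simp [if_neg hod', hk]
      refine Or.inr (Set.mem_biUnion (Finset.mem_range.2 hk) ?_)
      rw [Ini_arc', if_pos hev1, if_pos hev1]
      rw [hrek] at hzarc
      exact hzarc
    · have hj : k - cfQ α l < cfQ α (l+1) := by omega
      have hrek : re k = k - cfQ α l := by rw [hredef]; simp [if_neg hod', hk]
      refine Or.inl (Set.mem_biUnion (Finset.mem_range.2 hj) ?_)
      rw [Ini_arc', if_neg hod', if_neg hod']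
      have hidx : k - cfQ α l + cfQ α l = k := by omega
      rw [hidx]
      rw [hrek] at hzarc
      exact hzarc


lemma partition_id {μ : Measure Circle1}
    (hβ : ∀ x : ℝ, Filter.Tendsto (fun n : ℕ => H.lift^[n] x / n) Filter.atTop (nhds β))
    (hfract : Int.fract β = α) (hirr : Irrational α) (h01 : α ∈ Set.Ioo (0:ℝ) 1)
    (hs0 : projC s0 = x0)
    (hprob : IsProbabilityMeasure μ) (hmap : μ.map H.toFun = μ) (l : ℕ) :
    (cfQ α (l+1) : ℝ≥0∞) * μ (DynPart.In H α x0 l)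
      + (cfQ α l : ℝ≥0∞) * μ (DynPart.In H α x0 (l+1)) = 1 := by
  have hdisj1 : (↑(Finset.range (cfQ α (l+1))) : Set ℕ).PairwiseDisjoint
      (fun i => DynPart.Ini H α x0 l i) := by
    intro a ha b hb hab
    have ha' : a < cfQ α (l+1) := Finset.mem_range.1 (by exact_mod_cast ha)
    have hb' : b < cfQ α (l+1) := Finset.mem_range.1 (by exact_mod_cast hb)
    exact part_disj H x0 s0 hβ hfract hirr h01 hs0 l (Or.inl ⟨rfl, ha'⟩) (Or.inl ⟨rfl, hb'⟩)
      (fun hh => hab hh.2)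
  have hdisj2 : (↑(Finset.range (cfQ α l)) : Set ℕ).PairwiseDisjoint
      (fun j => DynPart.Ini H α x0 (l+1) j) := by
    intro a ha b hb hab
    have ha' : a < cfQ α l := Finset.mem_range.1 (by exact_mod_cast ha)
    have hb' : b < cfQ α l := Finset.mem_range.1 (by exact_mod_cast hb)
    exact part_disj H x0 s0 hβ hfract hirr h01 hs0 l (Or.inr ⟨rfl, ha'⟩) (Or.inr ⟨rfl, hb'⟩)
      (fun hh => hab hh.2)
  have hU1 : μ (⋃ i ∈ Finset.range (cfQ α (l+1)), DynPart.Ini H α x0 l i)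
      = (cfQ α (l+1) : ℝ≥0∞) * μ (DynPart.In H α x0 l) := by
    rw [measure_biUnion_finset hdisj1 (fun i _ => Ini_meas H x0 l i)]
    have hsummand : ∀ i ∈ Finset.range (cfQ α (l+1)),
        μ (DynPart.Ini H α x0 l i) = μ (DynPart.In H α x0 l) := by
      intro i _
      rw [DynPart.Ini]
      exact meas_image_iter H hmap i (In_meas H x0 l)
    rw [Finset.sum_congr rfl hsummand, Finset.sum_const, Finset.card_range, nsmul_eq_mul]
  have hU2 : μ (⋃ j ∈ Finset.range (cfQ α l), DynPart.Ini H α x0 (l+1) j)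
      = (cfQ α l : ℝ≥0∞) * μ (DynPart.In H α x0 (l+1)) := by
    rw [measure_biUnion_finset hdisj2 (fun j _ => Ini_meas H x0 (l+1) j)]
    have hsummand : ∀ j ∈ Finset.range (cfQ α l),
        μ (DynPart.Ini H α x0 (l+1) j) = μ (DynPart.In H α x0 (l+1)) := by
      intro j _
      rw [DynPart.Ini]
      exact meas_image_iter H hmap j (In_meas H x0 (l+1))
    rw [Finset.sum_congr rfl hsummand, Finset.sum_const, Finset.card_range, nsmul_eq_mul]
  have hdisjU : Disjoint (⋃ i ∈ Finset.range (cfQ α (l+1)), DynPart.Ini H α x0 l i)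
      (⋃ j ∈ Finset.range (cfQ α l), DynPart.Ini H α x0 (l+1) j) := by
    rw [Set.disjoint_left]
    intro z hz1 hz2
    obtain ⟨i, hi, hzi⟩ := Set.mem_iUnion₂.1 hz1
    obtain ⟨j, hj, hzj⟩ := Set.mem_iUnion₂.1 hz2
    have hd := part_disj H x0 s0 hβ hfract hirr h01 hs0 l
      (Or.inl ⟨rfl, Finset.mem_range.1 hi⟩) (Or.inr ⟨rfl, Finset.mem_range.1 hj⟩)
      (fun hh => by omega)
    exact Set.disjoint_left.1 hd hzi hzj
  have hcover : (⋃ i ∈ Finset.range (cfQ α (l+1)), DynPart.Ini H α x0 l i)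
      ∪ (⋃ j ∈ Finset.range (cfQ α l), DynPart.Ini H α x0 (l+1) j) = Set.univ :=
    Set.eq_univ_of_univ_subset (partition_cover H x0 s0 hβ hfract hirr h01 hs0 l)
  have hmeas2 : MeasurableSet (⋃ j ∈ Finset.range (cfQ α l), DynPart.Ini H α x0 (l+1) j) :=
    Finset.measurableSet_biUnion _ (fun j _ => Ini_meas H x0 (l+1) j)
  have := measure_union (μ := μ) hdisjU hmeas2
  rw [hcover, hU1, hU2] at this
  rw [← this, measure_univ]

lemma cfQ_lt_two (hirr : Irrational α) (h01 : α ∈ Set.Ioo (0:ℝ) 1) (l : ℕ) :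
    cfQ α l < cfQ α (l+2) := by
  have h1 := cfA_pos hirr h01 (l+1)
  have hp := cfQ_pos hirr h01 (l+1)
  have hrec : cfQ α (l+2) = cfA α (l+2) * cfQ α (l+1) + cfQ α l := rfl
  have hmul : 1 ≤ cfA α (l+2) * cfQ α (l+1) := Nat.one_le_iff_ne_zero.2 (by positivity)
  omega

lemma incl
    (hβ : ∀ x : ℝ, Filter.Tendsto (fun n : ℕ => H.lift^[n] x / n) Filter.atTop (nhds β))
    (hfract : Int.fract β = α) (hirr : Irrational α) (h01 : α ∈ Set.Ioo (0:ℝ) 1)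
    (hs0 : projC s0 = x0) (l : ℕ) :
    DynPart.In H α x0 (l+2) ⊆ DynPart.In H α x0 l := by
  have hq := cfQ_pos hirr h01 l
  have hq2 := cfQ_pos hirr h01 (l+2)
  have hlt := cfQ_lt_two (α := α) hirr h01 l
  rw [DynPart.In, DynPart.In]
  rcases Nat.even_or_odd l with hev | hod
  · have hev2 : Even (l+2) := by
      obtain ⟨c, hc⟩ := hev
      exact ⟨c+1, by omega⟩
    rw [if_pos hev, if_pos hev2]
    apply arc_subset_left
    apply le_of_lt
    have hA1 := factA hirr h01 l
    rw [Even.neg_one_pow hev, one_mul] at hA1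
    have hA2 := factA hirr h01 (l+2)
    rw [Even.neg_one_pow hev2, one_mul] at hA2
    have hcm := cmpl_pt H x0 s0 hβ hfract hirr hs0 0 (cfQ α l) (cfQ α (l+2))
      (by omega) (by omega) ?_
    · exact hcm
    · have harg1 : ((((cfQ α (l+2):ℕ):ℤ) - ((0:ℕ):ℤ) : ℤ):ℝ) * α
          = ((cfQ α (l+2) : ℕ):ℝ) * α := by push_cast; ring
      have harg2 : ((((cfQ α l:ℕ):ℤ) - ((0:ℕ):ℤ) : ℤ):ℝ) * α
          = ((cfQ α l : ℕ):ℝ) * α := by push_cast; ring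
      rw [harg1, harg2, hA1, hA2]
      exact lt_trans (PiG_anti hirr h01 (l+1)) (PiG_anti hirr h01 l)
  · have hod' : ¬ Even l := Nat.not_even_iff_odd.2 hod
    have hod2 : ¬ Even (l+2) := by
      intro h
      obtain ⟨c, hc⟩ := h
      exact hod' ⟨c-1, by omega⟩
    rw [if_neg hod', if_neg hod2]
    apply arc_subset_right
    have hA1 := factA hirr h01 l
    rw [Odd.neg_one_pow hod] at hA1
    have hB := factB hirr h01 l hod
    have hcm := cmpl_pt H x0 s0 hβ hfract hirr hs0 (cfQ α l) 0 (cfQ α (l+2))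
      (by omega) (by omega) ?_
    · exact hcm
    · have harg1 : ((((cfQ α (l+2):ℕ):ℤ) - ((cfQ α l:ℕ):ℤ) : ℤ):ℝ) * α
          = (((cfQ α (l+2) : ℤ) - (cfQ α l : ℤ) : ℤ):ℝ) * α := by push_cast; ring
      have harg2 : ((((0:ℕ):ℤ) - ((cfQ α l:ℕ):ℤ) : ℤ):ℝ) * α
          = -1 * (((cfQ α l : ℕ):ℝ) * α) := by push_cast; ring
      rw [harg1, harg2, hB, hA1]
      have := PiG_pos hirr h01 (l+2)
      linarith

end MainCtx

end AuxMain

/-- Writing `δ_n = μ(I_n)`, one has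
`μ(⋃_{i<q_n} (I_{n-1}^i \ I_{n+1}^i)) = q_n (δ_{n-1} - δ_{n+1}) ≥ 1 - 2/a_{n+1}`. -/
theorem stmt12 (H : CircleHomeo) (α : ℝ) (hirr : Irrational α)
    (hrot : HasRotationNumber H α) (μ : Measure Circle1)
    (hμ : IsInvProbMeasure H μ)
    (huniq : ∀ ν : Measure Circle1, IsInvProbMeasure H ν → ν = μ)
    (x0 : Circle1) (n : ℕ) (hn : 1 ≤ n) :
    μ (⋃ i ∈ Set.Iio (cfQ α n),
        (DynPart.Ini H α x0 (n - 1) i \ DynPart.Ini H α x0 (n + 1) i))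
      = (cfQ α n : ℝ≥0∞)
          * (μ (DynPart.In H α x0 (n - 1)) - μ (DynPart.In H α x0 (n + 1))) ∧
    1 - 2 / (cfA α (n + 1) : ℝ≥0∞)
      ≤ (cfQ α n : ℝ≥0∞)
          * (μ (DynPart.In H α x0 (n - 1)) - μ (DynPart.In H α x0 (n + 1))) := by
  obtain ⟨hIco, β, hfract, hβ⟩ := hrot
  obtain ⟨hprob, hmap⟩ := hμ
  haveI := hprob
  have hα0 : α ≠ 0 := fun h => (h ▸ hirr) ⟨0, by norm_num⟩
  have h01 : α ∈ Set.Ioo (0:ℝ) 1 := ⟨lt_of_le_of_ne hIco.1 (Ne.symm hα0), hIco.2⟩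
  obtain ⟨s0, hs0⟩ := projC_surj x0
  obtain ⟨l, rfl⟩ : ∃ l, n = l + 1 := ⟨n - 1, by omega⟩
  simp only [Nat.add_sub_cancel]
  have hsub : DynPart.In H α x0 (l+1+1) ⊆ DynPart.In H α x0 l :=
    incl H x0 s0 hβ hfract hirr h01 hs0 l
  have himgsub : ∀ i : ℕ, DynPart.Ini H α x0 (l+1+1) i ⊆ DynPart.Ini H α x0 l i := by
    intro i
    rw [DynPart.Ini, DynPart.Ini]
    exact Set.image_mono hsub
  have hδ2le : μ (DynPart.In H α x0 (l+1+1)) ≤ μ (DynPart.In H α x0 l) :=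
    measure_mono hsub
  -- Part 1 : the equality
  have hpart1 : μ (⋃ i ∈ Set.Iio (cfQ α (l+1)),
        (DynPart.Ini H α x0 l i \ DynPart.Ini H α x0 (l+1+1) i))
      = (cfQ α (l+1) : ℝ≥0∞)
          * (μ (DynPart.In H α x0 l) - μ (DynPart.In H α x0 (l+1+1))) := by
    have hset : (⋃ i ∈ Set.Iio (cfQ α (l+1)),
          (DynPart.Ini H α x0 l i \ DynPart.Ini H α x0 (l+1+1) i))
        = ⋃ i ∈ Finset.range (cfQ α (l+1)),
          (DynPart.Ini H α x0 l i \ DynPart.Ini H α x0 (l+1+1) i) := by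
      ext z
      simp only [Set.mem_iUnion, Set.mem_Iio, Finset.mem_range, exists_prop]
    rw [hset]
    have hdisj : (↑(Finset.range (cfQ α (l+1))) : Set ℕ).PairwiseDisjoint
        (fun i => DynPart.Ini H α x0 l i \ DynPart.Ini H α x0 (l+1+1) i) := by
      intro a ha b hb hab
      have ha' : a < cfQ α (l+1) := Finset.mem_range.1 (by exact_mod_cast ha)
      have hb' : b < cfQ α (l+1) := Finset.mem_range.1 (by exact_mod_cast hb)
      have hd := part_disj H x0 s0 hβ hfract hirr h01 hs0 l
        (Or.inl ⟨rfl, ha'⟩) (Or.inl ⟨rfl, hb'⟩) (fun hh => hab hh.2)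
      exact hd.mono Set.diff_subset Set.diff_subset
    rw [measure_biUnion_finset hdisj
      (fun i _ => (Ini_meas H x0 l i).diff (Ini_meas H x0 (l+1+1) i))]
    have hterm : ∀ i ∈ Finset.range (cfQ α (l+1)),
        μ (DynPart.Ini H α x0 l i \ DynPart.Ini H α x0 (l+1+1) i)
        = μ (DynPart.In H α x0 l) - μ (DynPart.In H α x0 (l+1+1)) := by
      intro i _
      rw [measure_diff (himgsub i) (Ini_meas H x0 (l+1+1) i).nullMeasurableSet
        (measure_ne_top μ _)]
      have e1 : μ (DynPart.Ini H α x0 l i) = μ (DynPart.In H α x0 l) := by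
        rw [DynPart.Ini]
        exact meas_image_iter H hmap i (In_meas H x0 l)
      have e2 : μ (DynPart.Ini H α x0 (l+1+1) i) = μ (DynPart.In H α x0 (l+1+1)) := by
        rw [DynPart.Ini]
        exact meas_image_iter H hmap i (In_meas H x0 (l+1+1))
      rw [e1, e2]
    rw [Finset.sum_congr rfl hterm, Finset.sum_const, Finset.card_range, nsmul_eq_mul]
  refine ⟨hpart1, ?_⟩
  -- Part 2 : the lower bound
  have Id1 := partition_id H x0 s0 hβ hfract hirr h01 hs0 hprob hmap l
  have Id2 := partition_id H x0 s0 hβ hfract hirr h01 hs0 hprob hmap (l+1)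
  have Id3 := partition_id H x0 s0 hβ hfract hirr h01 hs0 hprob hmap (l+1+1)
  have ha : 1 ≤ cfA α (l+1+1) := cfA_pos hirr h01 (l+1)
  have ha0 : (cfA α (l+1+1) : ℝ≥0∞) ≠ 0 := by
    exact_mod_cast Nat.pos_iff_ne_zero.1 ha
  have hatop : (cfA α (l+1+1) : ℝ≥0∞) ≠ ⊤ := ENNReal.natCast_ne_top _
  have hrec : cfQ α (l+1+1) = cfA α (l+1+1) * cfQ α (l+1) + cfQ α l := rfl
  have hq1 : cfA α (l+1+1) * cfQ α l ≤ cfQ α (l+1+1) := by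
    calc cfA α (l+1+1) * cfQ α l ≤ cfA α (l+1+1) * cfQ α (l+1) :=
      Nat.mul_le_mul_left _ (cfQ_mono hirr h01 l)
    _ ≤ cfQ α (l+1+1) := by omega
  have hq2 : cfA α (l+1+1) * cfQ α (l+1) ≤ cfQ α (l+1+1+1) := by
    calc cfA α (l+1+1) * cfQ α (l+1) ≤ cfQ α (l+1+1) := by omega
    _ ≤ cfQ α (l+1+1+1) := cfQ_mono hirr h01 (l+1+1)
  have hδ1le1 : (cfQ α (l+1+1) : ℝ≥0∞) * μ (DynPart.In H α x0 (l+1)) ≤ 1 := by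
    rw [← Id2]
    exact self_le_add_right _ _
  have hδ2le1 : (cfQ α (l+1+1+1) : ℝ≥0∞) * μ (DynPart.In H α x0 (l+1+1)) ≤ 1 := by
    rw [← Id3]
    exact self_le_add_right _ _
  have hb1 : (cfQ α l : ℝ≥0∞) * μ (DynPart.In H α x0 (l+1))
      ≤ 1 / (cfA α (l+1+1) : ℝ≥0∞) := by
    rw [ENNReal.le_div_iff_mul_le (Or.inl ha0) (Or.inl hatop)]
    calc (cfQ α l : ℝ≥0∞) * μ (DynPart.In H α x0 (l+1)) * (cfA α (l+1+1) : ℝ≥0∞)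
        = ((cfA α (l+1+1) * cfQ α l : ℕ) : ℝ≥0∞) * μ (DynPart.In H α x0 (l+1)) := by
          push_cast
          ring
    _ ≤ (cfQ α (l+1+1) : ℝ≥0∞) * μ (DynPart.In H α x0 (l+1)) :=
        mul_le_mul_left (by exact_mod_cast hq1) _
    _ ≤ 1 := hδ1le1
  have hb2 : (cfQ α (l+1) : ℝ≥0∞) * μ (DynPart.In H α x0 (l+1+1))
      ≤ 1 / (cfA α (l+1+1) : ℝ≥0∞) := by
    rw [ENNReal.le_div_iff_mul_le (Or.inl ha0) (Or.inl hatop)]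
    calc (cfQ α (l+1) : ℝ≥0∞) * μ (DynPart.In H α x0 (l+1+1)) * (cfA α (l+1+1) : ℝ≥0∞)
        = ((cfA α (l+1+1) * cfQ α (l+1) : ℕ) : ℝ≥0∞) * μ (DynPart.In H α x0 (l+1+1)) := by
          push_cast
          ring
    _ ≤ (cfQ α (l+1+1+1) : ℝ≥0∞) * μ (DynPart.In H α x0 (l+1+1)) :=
        mul_le_mul_left (by exact_mod_cast hq2) _
    _ ≤ 1 := hδ2le1
  have hkey : (cfQ α (l+1) : ℝ≥0∞)
        * (μ (DynPart.In H α x0 l) - μ (DynPart.In H α x0 (l+1+1)))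
        + (cfQ α (l+1) : ℝ≥0∞) * μ (DynPart.In H α x0 (l+1+1))
      = (cfQ α (l+1) : ℝ≥0∞) * μ (DynPart.In H α x0 l) := by
    rw [← mul_add, tsub_add_cancel_of_le hδ2le]
  rw [tsub_le_iff_right]
  have h2a : 2 / (cfA α (l+1+1) : ℝ≥0∞)
      = 1 / (cfA α (l+1+1) : ℝ≥0∞) + 1 / (cfA α (l+1+1) : ℝ≥0∞) := by
    rw [ENNReal.div_add_div_same]
    norm_num
  calc (1:ℝ≥0∞) = (cfQ α (l+1) : ℝ≥0∞) * μ (DynPart.In H α x0 l)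
        + (cfQ α l : ℝ≥0∞) * μ (DynPart.In H α x0 (l+1)) := Id1.symm
  _ = ((cfQ α (l+1) : ℝ≥0∞)
        * (μ (DynPart.In H α x0 l) - μ (DynPart.In H α x0 (l+1+1)))
        + (cfQ α (l+1) : ℝ≥0∞) * μ (DynPart.In H α x0 (l+1+1)))
        + (cfQ α l : ℝ≥0∞) * μ (DynPart.In H α x0 (l+1)) := by rw [hkey]
  _ ≤ ((cfQ α (l+1) : ℝ≥0∞)
        * (μ (DynPart.In H α x0 l) - μ (DynPart.In H α x0 (l+1+1)))
        + 1 / (cfA α (l+1+1) : ℝ≥0∞)) + 1 / (cfA α (l+1+1) : ℝ≥0∞) :=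
      add_le_add (add_le_add le_rfl hb2) hb1
  _ = (cfQ α (l+1) : ℝ≥0∞)
        * (μ (DynPart.In H α x0 l) - μ (DynPart.In H α x0 (l+1+1)))
        + 2 / (cfA α (l+1+1) : ℝ≥0∞) := by
      rw [h2a, add_assoc]
end
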